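/- arXiv:2001.10476 — 4 statements merged into one kernel-verified Lean document; each statement's English description precedes it below -/
import Mathlib

section
/- Let α ≥ 0 and 2 + 2α < p < 2(2+α). Then the following three statements are equivalent: (a) B((2+α)/p, 1−(2+α)/p) · H_{α,p}(0) − ∫₀¹ ψ_{α,p}(t) K_{α,p}(0,t) dt ≤ 0; (b) B((2+α)/p, 1−(2+α)/p) · [½ B((p−2α−2)/2, α+1) − 1/(2(α+1))] − ½ ∫₀¹ ψ_{α,p}(t) B_{t⁴}((p−2α−2)/2, α+1) dt ≤ 0; (c) ∫₀¹ I_t((2+α)/p, 1−(2+α)/p) t^{2p−4α−5}(1−t⁴)^α dt − 1/(4(α+1)) ≤ 0. -/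
open MeasureTheory intervalIntegral

/-- The Beta function `B(x,y) = ∫₀¹ t^(x-1) (1-t)^(y-1) dt`. -/
noncomputable def betaFn (x y : ℝ) : ℝ :=
  ∫ t in (0:ℝ)..1, t ^ (x - 1) * (1 - t) ^ (y - 1)

/-- The incomplete Beta function `B_T(x,y) = ∫₀^T s^(x-1) (1-s)^(y-1) ds`. -/
noncomputable def betaInc (T x y : ℝ) : ℝ :=
  ∫ s in (0:ℝ)..T, s ^ (x - 1) * (1 - s) ^ (y - 1)

/-- The regularized incomplete Beta function `I_T(x,y) = B_T(x,y)/B(x,y)`. -/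
noncomputable def betaReg (T x y : ℝ) : ℝ := betaInc T x y / betaFn x y

/-- Generalized binomial coefficient `binom(α,k) = α(α-1)⋯(α-k+1)/k!`. -/
noncomputable def gBinom (α : ℝ) (k : ℕ) : ℝ :=
  (∏ i ∈ Finset.range k, (α - i)) / (Nat.factorial k)

/-- `ψ_{α,p}(t) = t^((2+α)/p - 1) (1-t)^(-(2+α)/p)`. -/
noncomputable def psiFn (α p t : ℝ) : ℝ :=
  t ^ ((2 + α) / p - 1) * (1 - t) ^ (-((2 + α) / p))

/-- `H_{α,p}(s) = Σ_k binom(α,k)(-1)^k/(p-2α-2+2k) - (1/(2(α+1)))(1-s⁴)^(α+1)`. -/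
noncomputable def Hfun (α p s : ℝ) : ℝ :=
  (∑' k : ℕ, gBinom α k * (-1) ^ k / (p - 2 * α - 2 + 2 * k)) -
    1 / (2 * (α + 1)) * (1 - s ^ 4) ^ (α + 1)

/-- `K_{α,p}(s,t) = Σ_k binom(α,k)(-1)^k max{s²,t²}^(p-2α-2+2k)/(p-2α-2+2k)`. -/
noncomputable def Kfun (α p s t : ℝ) : ℝ :=
  ∑' k : ℕ, gBinom α k * (-1) ^ k * (max (s ^ 2) (t ^ 2)) ^ (p - 2 * α - 2 + 2 * (k : ℝ)) /
    (p - 2 * α - 2 + 2 * k)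

/-- Condition (C): `∫₀¹ I_t((2+α)/p, 1-(2+α)/p) t^(2p-4α-5)(1-t⁴)^α dt - 1/(4(α+1)) ≤ 0`. -/
noncomputable def condC (α p : ℝ) : Prop :=
  (∫ t in (0:ℝ)..1,
      betaReg t ((2 + α) / p) (1 - (2 + α) / p) * t ^ (2 * p - 4 * α - 5) * (1 - t ^ 4) ^ α)
    - 1 / (4 * (α + 1)) ≤ 0

/-- Lebesgue area measure on `ℂ` normalized so that the unit disk has measure 1. -/
noncomputable def normalizedArea : Measure ℂ := (ENNReal.ofReal Real.pi)⁻¹ • volume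

/-- The (p-th power of the) weighted Bergman norm:
`‖f‖_{A^p_α} = ((α+1) ∫_𝔻 |f(w)|^p (1-|w|²)^α dA(w))^(1/p)`. -/
noncomputable def bergmanNorm (α p : ℝ) (f : ℂ → ℂ) : ℝ :=
  ((α + 1) * ∫ w in Metric.ball (0 : ℂ) 1,
      ‖f w‖ ^ p * (1 - ‖w‖ ^ 2) ^ α ∂normalizedArea) ^ (1 / p)

/-- Membership in the weighted Bergman space `A^p_α`: `f` is analytic on the unit disk and has
finite Bergman norm (the defining integrand is integrable). -/
def MemBergman (α p : ℝ) (f : ℂ → ℂ) : Prop :=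
  DifferentiableOn ℂ f (Metric.ball (0 : ℂ) 1) ∧
  IntegrableOn (fun w => ‖f w‖ ^ p * (1 - ‖w‖ ^ 2) ^ α)
    (Metric.ball (0 : ℂ) 1) normalizedArea

/-- The Hilbert matrix operator `ℋ(f)(z) = ∫₀¹ f(t/((t-1)z+1)) / ((t-1)z+1) dt`. -/
noncomputable def hilbertOp (f : ℂ → ℂ) (z : ℂ) : ℂ :=
  ∫ t in (0:ℝ)..1, f ((t : ℂ) / (((t : ℂ) - 1) * z + 1)) / (((t : ℂ) - 1) * z + 1)

/-- The operator norm of the Hilbert matrix operator on `A^p_α`: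
`sup { ‖ℋ f‖_{A^p_α} : f ∈ A^p_α, ‖f‖_{A^p_α} ≤ 1 }`. -/
noncomputable def hilbertOpNorm (α p : ℝ) : ℝ :=
  sSup {c : ℝ | ∃ f : ℂ → ℂ, MemBergman α p f ∧ bergmanNorm α p f ≤ 1 ∧
    c = bergmanNorm α p (hilbertOp f)}

lemma gBinom_zero (α : ℝ) : gBinom α 0 = 1 := by simp [gBinom]

lemma gBinom_succ (α : ℝ) (k : ℕ) :
    gBinom α (k + 1) = gBinom α k * (α - k) / (k + 1) := by
  have hk : (Nat.factorial k : ℝ) ≠ 0 := Nat.cast_ne_zero.2 (Nat.factorial_ne_zero k)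
  have hk1 : ((k : ℝ) + 1) ≠ 0 := by positivity
  rw [gBinom, gBinom, Finset.prod_range_succ, Nat.factorial_succ]
  push_cast
  field_simp

lemma gBinom_abs_succ (α : ℝ) (k : ℕ) :
    |gBinom α (k + 1)| = |gBinom α k| * |α - k| / ((k : ℝ) + 1) := by
  rw [gBinom_succ, abs_div, abs_mul, abs_of_pos (show (0:ℝ) < (k:ℝ) + 1 by positivity)]

lemma gBinom_bound (α : ℝ) (hα : 0 ≤ α) :
    ∃ C : ℝ, 0 < C ∧ ∀ k : ℕ, ((k : ℝ) + 1) * |gBinom α k| ≤ C := by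
  set N := ⌈α⌉₊ with hN
  have hnonneg : ∀ j ∈ Finset.range (N + 1), 0 ≤ ((j : ℝ) + 1) * |gBinom α j| :=
    fun j _ => by positivity
  set C := (∑ j ∈ Finset.range (N + 1), ((j : ℝ) + 1) * |gBinom α j|) + 1 with hC
  have hCpos : 0 < C := by
    have := Finset.sum_nonneg hnonneg
    rw [hC]; linarith
  have step : ∀ k : ℕ, N ≤ k →
      (((k:ℝ) + 1) + 1) * |gBinom α (k + 1)| ≤ ((k : ℝ) + 1) * |gBinom α k| := by
    intro k hk
    have hαk : α ≤ (k : ℝ) := le_trans (Nat.le_ceil α) (by exact_mod_cast hk)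
    have hb := abs_nonneg (gBinom α k)
    have h1 : |gBinom α (k+1)| = |gBinom α k| * ((k:ℝ) - α) / ((k:ℝ) + 1) := by
      rw [gBinom_abs_succ, abs_of_nonpos (by linarith : α - (k:ℝ) ≤ 0)]; ring_nf
    rw [h1, mul_div_assoc', div_le_iff₀ (show (0:ℝ) < (k:ℝ) + 1 by positivity)]
    nlinarith [mul_nonneg hb hα, mul_nonneg (mul_nonneg hb hα) (Nat.cast_nonneg (α := ℝ) k)]
  have dec : ∀ k : ℕ, N ≤ k → ((k : ℝ) + 1) * |gBinom α k| ≤ ((N:ℝ) + 1) * |gBinom α N| := by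
    intro k hk
    induction k, hk using Nat.le_induction with
    | base => exact le_refl _
    | succ n hn ih => exact le_trans (by exact_mod_cast step n hn) ih
  refine ⟨C, hCpos, fun k => ?_⟩
  rcases le_or_gt k N with h | h
  · have hmem : k ∈ Finset.range (N + 1) := Finset.mem_range.2 (Nat.lt_succ_of_le h)
    have := Finset.single_le_sum hnonneg hmem
    rw [hC]; linarith
  · have hmem : N ∈ Finset.range (N + 1) := Finset.mem_range.2 (Nat.lt_succ_self N)
    have h2 := Finset.single_le_sum hnonneg hmem
    have h3 := dec k h.le
    rw [hC]; linarith

lemma gBinom_abs_le (α : ℝ) {C : ℝ} (hC : ∀ k : ℕ, ((k : ℝ) + 1) * |gBinom α k| ≤ C) (k : ℕ) :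
    |gBinom α k| ≤ C := by
  have := hC k
  nlinarith [abs_nonneg (gBinom α k), Nat.cast_nonneg (α := ℝ) k]

lemma gBinom_summable_div (α : ℝ) (hα : 0 ≤ α) {c : ℝ} (hc : 0 < c) :
    Summable (fun k : ℕ => |gBinom α k| / (c + k)) := by
  obtain ⟨C, hC0, hC⟩ := gBinom_bound α hα
  set m := min c 1 with hm
  have hm0 : 0 < m := lt_min hc one_pos
  have hsq : Summable (fun k : ℕ => 1 / ((k : ℝ) + 1) ^ 2) := by
    have h0 : Summable (fun n : ℕ => 1 / (n : ℝ) ^ 2) :=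
      Real.summable_one_div_nat_pow.2 one_lt_two
    have := (summable_nat_add_iff (f := fun n : ℕ => 1 / (n : ℝ) ^ 2) 1).2 h0
    simpa using this
  apply Summable.of_nonneg_of_le (fun k => by positivity) (fun k => ?_)
    (hsq.mul_left (C / m))
  have hk1 : (0:ℝ) < (k:ℝ) + 1 := by positivity
  have h1 : m * ((k:ℝ) + 1) ≤ c + k := by
    have h2 : m ≤ c := min_le_left _ _
    have h3 : m ≤ 1 := min_le_right _ _
    nlinarith [Nat.cast_nonneg (α := ℝ) k]
  have h2 : |gBinom α k| ≤ C / ((k:ℝ) + 1) := by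
    rw [le_div_iff₀ hk1]; linarith [hC k]
  calc |gBinom α k| / (c + k) ≤ (C / ((k:ℝ)+1)) / (m * ((k:ℝ)+1)) :=
        div_le_div₀ (by positivity) h2 (by positivity) h1
    _ = C / m * (1 / ((k:ℝ)+1) ^ 2) := by field_simp

lemma summable_mul_geom {r : ℝ} (hr0 : 0 ≤ r) (hr : r < 1) :
    Summable (fun k : ℕ => (k : ℝ) * r ^ (k - 1)) := by
  apply (summable_nat_add_iff 1).1
  have h1 : Summable (fun n : ℕ => ((n:ℝ)) ^ 1 * r ^ n) :=
    summable_pow_mul_geometric_of_norm_lt_one 1 (by simpa [abs_of_nonneg hr0] using hr)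
  have h2 : Summable (fun n : ℕ => r ^ n) := summable_geometric_of_lt_one hr0 hr
  apply (h1.add h2).congr
  intro n
  push_cast
  ring

lemma gBinom_summable_pow (α : ℝ) (hα : 0 ≤ α) {z : ℝ} (hz : |z| < 1) :
    Summable (fun k : ℕ => gBinom α k * z ^ k) := by
  obtain ⟨C, hC0, hC⟩ := gBinom_bound α hα
  apply Summable.of_norm
  apply Summable.of_nonneg_of_le (fun k => norm_nonneg _) (fun k => ?_)
    ((summable_geometric_of_lt_one (abs_nonneg z) hz).mul_left C)
  rw [norm_mul, norm_pow, Real.norm_eq_abs, Real.norm_eq_abs]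
  exact mul_le_mul_of_nonneg_right (gBinom_abs_le α hC k) (by positivity)

lemma gBinom_hasSum (α : ℝ) (hα : 0 ≤ α) {x : ℝ} (hx : |x| < 1) :
    HasSum (fun k : ℕ => gBinom α k * x ^ k) ((1 + x) ^ α) := by
  obtain ⟨C, hC0, hC⟩ := gBinom_bound α hα
  have habs := gBinom_abs_le α hC
  have hderiv : ∀ z : ℝ, |z| < 1 →
      HasDerivAt (fun w : ℝ => ∑' k : ℕ, gBinom α k * w ^ k)
        (∑' k : ℕ, gBinom α k * ((k:ℝ) * z ^ (k-1))) z := by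
    intro z hz
    set r := (|z| + 1) / 2 with hr
    have hr0 : 0 < r := by positivity
    have hzr : |z| < r := by rw [hr]; linarith
    have hr1 : r < 1 := by rw [hr]; linarith
    have hu : Summable (fun k : ℕ => C * ((k : ℝ) * r ^ (k-1))) :=
      (summable_mul_geom hr0.le hr1).mul_left C
    refine hasDerivAt_tsum_of_isPreconnected (F := ℝ)
      (g := fun (k : ℕ) (y : ℝ) => gBinom α k * y ^ k)
      (g' := fun (k : ℕ) (y : ℝ) => gBinom α k * ((k:ℝ) * y ^ (k-1))) (y₀ := 0)
      hu (isOpen_Ioo (a := -r) (b := r)) ((convex_Ioo _ _).isPreconnected)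
      (fun k y _ => (hasDerivAt_pow k y).const_mul (gBinom α k))
      (fun k y hy => ?_) (Set.mem_Ioo.2 ⟨by linarith, hr0⟩) ?_
      (Set.mem_Ioo.2 (abs_lt.1 hzr))
    · show ‖gBinom α k * ((k:ℝ) * y ^ (k-1))‖ ≤ C * ((k:ℝ) * r ^ (k-1))
      rw [Real.norm_eq_abs, abs_mul, abs_mul, Nat.abs_cast, abs_pow]
      have hyr : |y| ≤ r := le_of_lt (abs_lt.2 ⟨hy.1, hy.2⟩)
      exact mul_le_mul (habs k)
        (mul_le_mul_of_nonneg_left (pow_le_pow_left₀ (abs_nonneg y) hyr _) (Nat.cast_nonneg k))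
        (by positivity) hC0.le
    · apply summable_of_ne_finset_zero (s := ({0} : Finset ℕ))
      intro k hk
      show gBinom α k * (0:ℝ) ^ k = 0
      rw [zero_pow (by simpa using hk), mul_zero]
  have hsum' : ∀ z : ℝ, |z| < 1 →
      Summable (fun k : ℕ => gBinom α k * ((k:ℝ) * z ^ (k-1))) := by
    intro z hz
    apply Summable.of_norm
    apply Summable.of_nonneg_of_le (fun k => norm_nonneg _) (fun k => ?_)
      ((summable_mul_geom (abs_nonneg z) hz).mul_left C)
    rw [Real.norm_eq_abs, abs_mul, abs_mul, Nat.abs_cast, abs_pow]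
    exact mul_le_mul (habs k)
      (mul_le_mul_of_nonneg_left (pow_le_pow_left₀ (abs_nonneg z) (le_refl _) _)
        (Nat.cast_nonneg k)) (by positivity) hC0.le
  have key : ∀ z : ℝ, |z| < 1 →
      (1 + z) * (∑' k : ℕ, gBinom α k * ((k:ℝ) * z ^ (k-1))) =
        α * ∑' k : ℕ, gBinom α k * z ^ k := by
    intro z hz
    set D := ∑' k : ℕ, gBinom α k * ((k:ℝ) * z ^ (k-1)) with hD
    have h1 : HasSum (fun k : ℕ => gBinom α k * ((k:ℝ) * z ^ (k-1))) D := (hsum' z hz).hasSum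
    have e2 : (fun k : ℕ => gBinom α k * ((k:ℝ) * z ^ (k-1)) * z) =
        fun k : ℕ => gBinom α k * ((k:ℝ) * z ^ k) := by
      funext k
      rcases k with _ | n
      · simp
      · simp only [Nat.add_sub_cancel]
        push_cast
        ring
    have h2 : HasSum (fun k : ℕ => gBinom α k * ((k:ℝ) * z ^ k)) (D * z) := by
      have h2' := h1.mul_right z
      rwa [e2] at h2'
    have h3 : HasSum (fun k : ℕ => gBinom α (k+1) * (((k+1:ℕ):ℝ) * z ^ ((k+1)-1))) D :=
      (hasSum_nat_add_iff (f := fun k : ℕ => gBinom α k * ((k:ℝ) * z ^ (k-1))) 1).2 (by simpa using h1)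
    have e3 : (fun k : ℕ => gBinom α (k+1) * (((k+1:ℕ):ℝ) * z ^ ((k+1)-1))) =
        fun k : ℕ => α * (gBinom α k * z ^ k) - gBinom α k * ((k:ℝ) * z ^ k) := by
      funext k
      rw [gBinom_succ]
      have hk1 : ((k:ℝ) + 1) ≠ 0 := by positivity
      simp only [Nat.add_sub_cancel]
      push_cast
      field_simp
    have h4 : HasSum (fun k : ℕ => α * (gBinom α k * z ^ k) - gBinom α k * ((k:ℝ) * z ^ k))
        (α * (∑' k : ℕ, gBinom α k * z ^ k) - D * z) :=
      ((gBinom_summable_pow α hα hz).hasSum.mul_left α).sub h2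
    rw [e3] at h3
    have h5 : D = α * (∑' k : ℕ, gBinom α k * z ^ k) - D * z := h3.unique h4
    linarith [h5]
  have hDzero : ∀ z ∈ Set.Ioo (-1 : ℝ) 1,
      HasDerivAt (fun w : ℝ => (∑' k : ℕ, gBinom α k * w ^ k) * (1 + w) ^ (-α)) 0 z := by
    intro z hzs
    have hz : |z| < 1 := abs_lt.2 ⟨hzs.1, hzs.2⟩
    have h1 : (0:ℝ) < 1 + z := by have := abs_lt.1 hz; linarith
    have hfd := hderiv z hz
    have hpd : HasDerivAt (fun w : ℝ => (1 + w) ^ (-α)) (-α * (1 + z) ^ (-α - 1)) z := by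
      have h := Real.hasDerivAt_rpow_const (x := 1 + z) (p := -α) (Or.inl h1.ne')
      have hid : HasDerivAt (fun w : ℝ => 1 + w) 1 z := by
        simpa using (hasDerivAt_id z).const_add 1
      exact (h.comp z hid).congr_deriv (by ring)
    have hmul := hfd.mul hpd
    refine hmul.congr_deriv ?_
    have e1 : (1+z) ^ (-α) = (1+z) * (1+z) ^ (-α-1) := by
      have h2 := Real.rpow_add h1 1 (-α-1)
      rw [show (1:ℝ) + (-α-1) = -α by ring] at h2
      rw [h2, Real.rpow_one]
    rw [e1]
    linear_combination ((1+z) ^ (-α - 1)) * (key z hz)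
  have hx1 : (0:ℝ) < 1 + x := by have := abs_lt.1 hx; linarith
  have hmemx : x ∈ Set.Ioo (-1:ℝ) 1 := ⟨(abs_lt.1 hx).1, (abs_lt.1 hx).2⟩
  have hmem0 : (0:ℝ) ∈ Set.Ioo (-1:ℝ) 1 := by constructor <;> norm_num
  have hconst : (∑' k : ℕ, gBinom α k * x ^ k) * (1 + x) ^ (-α) =
      (∑' k : ℕ, gBinom α k * (0:ℝ) ^ k) * (1 + 0) ^ (-α) := by
    apply (convex_Ioo (-1:ℝ) 1).is_const_of_fderivWithin_eq_zero
      (fun z hzs => (hDzero z hzs).differentiableAt.differentiableWithinAt)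
      (fun z hzs => ?_) hmemx hmem0
    rw [fderivWithin_of_isOpen isOpen_Ioo hzs, (hDzero z hzs).hasFDerivAt.fderiv]
    ext w
    simp
  have hf0 : (∑' k : ℕ, gBinom α k * (0:ℝ) ^ k) = 1 := by
    rw [tsum_eq_single 0 ?_]
    · simp [gBinom_zero]
    · intro k hk
      simp [zero_pow hk]
  rw [hf0, one_mul] at hconst
  simp only [add_zero, Real.one_rpow] at hconst
  have hinv : (1+x) ^ (-α) * (1+x) ^ α = 1 := by
    rw [← Real.rpow_add hx1]; simp
  have hfx : (∑' k : ℕ, gBinom α k * x ^ k) = (1 + x) ^ α := by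
    calc (∑' k : ℕ, gBinom α k * x ^ k)
        = (∑' k : ℕ, gBinom α k * x ^ k) * ((1+x) ^ (-α) * (1+x) ^ α) := by rw [hinv, mul_one]
      _ = ((∑' k : ℕ, gBinom α k * x ^ k) * (1+x) ^ (-α)) * (1+x) ^ α := by ring
      _ = 1 * (1+x) ^ α := by rw [hconst]
      _ = (1+x) ^ α := one_mul _
  have := (gBinom_summable_pow α hα hx).hasSum
  rwa [hfx] at this



lemma betaInc_series (α : ℝ) (hα : 0 ≤ α) {c : ℝ} (hc : 0 < c) {T : ℝ}
    (hT0 : 0 ≤ T) (hT1 : T ≤ 1) :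
    betaInc T c (α + 1) = ∑' k : ℕ, gBinom α k * (-1) ^ k * T ^ (c + (k:ℝ)) / (c + k) := by
  rcases eq_or_lt_of_le hT0 with rfl | hT0'
  · have hz : ∀ k : ℕ, gBinom α k * (-1) ^ k * (0:ℝ) ^ (c + (k:ℝ)) / (c + k) = 0 := by
      intro k
      rw [Real.zero_rpow (ne_of_gt (by positivity : (0:ℝ) < c + (k:ℝ)))]
      ring
    rw [betaInc, intervalIntegral.integral_same]
    rw [tsum_congr hz, tsum_zero]
  · have hck : ∀ k : ℕ, (-1:ℝ) < c - 1 + (k:ℝ) := by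
      intro k
      have := Nat.cast_nonneg (α := ℝ) k
      linarith
    have hint : ∀ k : ℕ, IntervalIntegrable
        (fun s : ℝ => gBinom α k * (-1) ^ k * s ^ (c - 1 + (k:ℝ))) volume 0 T :=
      fun k => (intervalIntegral.intervalIntegrable_rpow' (hck k)).const_mul _
    have hint' : ∀ k : ℕ, IntegrableOn
        (fun s : ℝ => gBinom α k * (-1) ^ k * s ^ (c - 1 + (k:ℝ))) (Set.Ioc 0 T) volume :=
      fun k => (intervalIntegrable_iff_integrableOn_Ioc_of_le hT0).1 (hint k)
    have hrpow_int : ∀ k : ℕ, (∫ s in (0:ℝ)..T, s ^ (c - 1 + (k:ℝ)))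
        = T ^ (c + (k:ℝ)) / (c + k) := by
      intro k
      rw [integral_rpow (Or.inl (hck k))]
      rw [Real.zero_rpow (show c - 1 + (k:ℝ) + 1 ≠ 0 by have := Nat.cast_nonneg (α := ℝ) k; intro h; linarith)]
      rw [show c - 1 + (k:ℝ) + 1 = c + k by ring]
      ring
    have hnorm : Summable (fun k : ℕ =>
        ∫ s in Set.Ioc 0 T, ‖gBinom α k * (-1) ^ k * s ^ (c - 1 + (k:ℝ))‖) := by
      apply Summable.of_nonneg_of_le (fun k => integral_nonneg (fun s => norm_nonneg _))
        (fun k => ?_) (gBinom_summable_div α hα hc)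
      have heq : ∫ s in Set.Ioc 0 T, ‖gBinom α k * (-1) ^ k * s ^ (c - 1 + (k:ℝ))‖
          = |gBinom α k| * (T ^ (c + (k:ℝ)) / (c + k)) := by
        rw [← Real.norm_eq_abs, ← hrpow_int k, ← intervalIntegral.integral_const_mul,
          intervalIntegral.integral_of_le hT0]
        apply setIntegral_congr_ae measurableSet_Ioc
        filter_upwards with s hs
        rw [norm_mul, norm_mul, Real.norm_eq_abs (s ^ _),
          abs_of_nonneg (Real.rpow_nonneg hs.1.le _)]
        simp [Real.norm_eq_abs]
      rw [heq]
      have hT2 : T ^ (c + (k:ℝ)) ≤ 1 := Real.rpow_le_one hT0 hT1 (by positivity)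
      have hd : (0:ℝ) < c + k := by positivity
      rw [div_eq_mul_inv, div_eq_mul_inv, ← mul_assoc]
      apply mul_le_mul_of_nonneg_right _ (by positivity)
      nlinarith [abs_nonneg (gBinom α k)]
    have hae : (fun s : ℝ => s ^ (c - 1) * (1 - s) ^ α) =ᵐ[volume.restrict (Set.Ioc 0 T)]
        (fun s : ℝ => ∑' k : ℕ, gBinom α k * (-1) ^ k * s ^ (c - 1 + (k:ℝ))) := by
      have h1 : ∀ᵐ (s : ℝ) ∂volume, s ≠ 1 := by
        rw [MeasureTheory.ae_iff]
        have : {s : ℝ | ¬ s ≠ 1} = {1} := by ext s; simp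
        rw [this]
        exact measure_singleton 1
      filter_upwards [ae_restrict_mem measurableSet_Ioc, MeasureTheory.ae_restrict_of_ae h1]
        with s hs hs1
      have hs0 : 0 < s := hs.1
      have hs2 : s < 1 := lt_of_le_of_ne (le_trans hs.2 hT1) hs1
      have hbin := gBinom_hasSum α hα (x := -s) (by rw [abs_neg, abs_of_pos hs0]; exact hs2)
      rw [show (1:ℝ) + -s = 1 - s by ring] at hbin
      rw [← hbin.tsum_eq, ← tsum_mul_left]
      apply tsum_congr
      intro k
      rw [neg_pow, ← Real.rpow_natCast s k, Real.rpow_add hs0]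
      ring
    rw [betaInc, show α + 1 - 1 = α from add_sub_cancel_right α 1,
      intervalIntegral.integral_of_le hT0, integral_congr_ae hae,
      ← MeasureTheory.integral_tsum_of_summable_integral_norm hint' hnorm]
    apply tsum_congr
    intro k
    rw [← intervalIntegral.integral_of_le hT0, intervalIntegral.integral_const_mul,
      hrpow_int k, mul_div_assoc]


lemma continuous_rpow_const_of_nonneg {α : ℝ} (hα : 0 ≤ α) :
    Continuous (fun u : ℝ => u ^ α) := by
  rw [continuous_iff_continuousAt]
  exact fun u => Real.continuousAt_rpow_const u α (Or.inr hα)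

lemma betaIntegrable {x y : ℝ} (hx : 0 < x) (hy : 0 < y) :
    IntervalIntegrable (fun t : ℝ => t ^ (x - 1) * (1 - t) ^ (y - 1)) volume 0 1 := by
  have h1 : IntervalIntegrable (fun t : ℝ => t ^ (x - 1) * (1 - t) ^ (y - 1))
      volume 0 (1/2) := by
    apply IntervalIntegrable.mul_continuousOn
      (intervalIntegral.intervalIntegrable_rpow' (by linarith))
    apply ContinuousOn.rpow_const ((continuous_const.sub continuous_id).continuousOn)
    intro t ht
    rw [Set.uIcc_of_le (by norm_num : (0:ℝ) ≤ 1/2)] at ht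
    exact Or.inl (by intro h; have := ht.2; norm_num at h; linarith)
  have h2 : IntervalIntegrable (fun t : ℝ => t ^ (x - 1) * (1 - t) ^ (y - 1))
      volume (1/2) 1 := by
    have hg : IntervalIntegrable (fun t : ℝ => (1 - t) ^ (y - 1)) volume (1/2) 1 := by
      have h := ((intervalIntegral.intervalIntegrable_rpow' (r := y - 1)
        (by linarith) (a := 0) (b := 1/2)).comp_sub_left 1).symm
      norm_num at h
      exact h
    apply IntervalIntegrable.continuousOn_mul hg
    apply ContinuousOn.rpow_const continuous_id.continuousOn
    intro t ht
    rw [Set.uIcc_of_le (by norm_num : (1:ℝ)/2 ≤ 1)] at ht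
    exact Or.inl (by simp only [id]; intro h; have := ht.1; rw [h] at this; norm_num at this)
  exact h1.trans h2

lemma ibp_key (α p : ℝ) (hα : 0 ≤ α) (hp1 : 2 + 2 * α < p) (hp2 : p < 2 * (2 + α)) :
    (∫ t in (0:ℝ)..1, psiFn α p t * betaInc (t ^ 4) ((p - 2 * α - 2) / 2) (α + 1))
      = betaFn ((2 + α) / p) (1 - (2 + α) / p) * betaFn ((p - 2 * α - 2) / 2) (α + 1)
        - 4 * ∫ t in (0:ℝ)..1, betaInc t ((2 + α) / p) (1 - (2 + α) / p) *
            (t ^ (2 * p - 4 * α - 5) * (1 - t ^ 4) ^ α) := by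
  have hp0 : 0 < p := by linarith
  set x := (2 + α) / p with hxdef
  set c := (p - 2 * α - 2) / 2 with hcdef
  have hx0 : 0 < x := div_pos (by linarith) hp0
  have hx1 : x < 1 := (div_lt_one hp0).2 (by linarith)
  have hc0 : 0 < c := by rw [hcdef]; linarith
  have he : (-1:ℝ) < 2 * p - 4 * α - 5 := by linarith
  set φ : ℝ → ℝ := fun t => t ^ (x - 1) * (1 - t) ^ ((1 - x) - 1) with hφdef
  set χ : ℝ → ℝ := fun s => s ^ (c - 1) * (1 - s) ^ ((α + 1) - 1) with hχdef
  have hφint : IntervalIntegrable φ volume 0 1 := betaIntegrable hx0 (by linarith)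
  have hχint : IntervalIntegrable χ volume 0 1 := betaIntegrable hc0 (by linarith)
  set F : ℝ → ℝ := fun t => betaInc t x (1 - x) with hFdef
  set H : ℝ → ℝ := fun u => betaInc u c (α + 1) with hHdef
  set G : ℝ → ℝ := fun t => H (t ^ 4) with hGdef
  set τ : ℝ → ℝ := fun t => t ^ (2 * p - 4 * α - 5) * (1 - t ^ 4) ^ α with hτdef
  have hFcont : ContinuousOn F (Set.Icc 0 1) := by
    have := intervalIntegral.continuousOn_primitive_interval' hφint
      (Set.left_mem_uIcc (a := (0:ℝ)) (b := 1))
    rwa [Set.uIcc_of_le zero_le_one] at this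
  have hHcont : ContinuousOn H (Set.Icc 0 1) := by
    have := intervalIntegral.continuousOn_primitive_interval' hχint
      (Set.left_mem_uIcc (a := (0:ℝ)) (b := 1))
    rwa [Set.uIcc_of_le zero_le_one] at this
  have hmaps : ∀ t ∈ Set.Icc (0:ℝ) 1, t ^ 4 ∈ Set.Icc (0:ℝ) 1 := fun t ht =>
    ⟨pow_nonneg ht.1 4, pow_le_one₀ ht.1 ht.2⟩
  have hGcont : ContinuousOn G (Set.Icc 0 1) :=
    hHcont.comp ((continuous_pow 4).continuousOn) hmaps
  have hsub : ∀ t ∈ Set.Icc (0:ℝ) 1, Set.uIcc 0 t ⊆ Set.uIcc (0:ℝ) 1 :=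
    fun t ht => Set.uIcc_subset_uIcc (Set.left_mem_uIcc)
      (by rw [Set.uIcc_of_le zero_le_one]; exact ht)
  have hφcontAt : ∀ t ∈ Set.Ioo (0:ℝ) 1, ContinuousAt φ t := by
    intro t ht
    apply ContinuousAt.mul
    · exact Real.continuousAt_rpow_const t (x - 1) (Or.inl ht.1.ne')
    · exact (Real.continuousAt_rpow_const (1 - t) ((1 - x) - 1)
        (Or.inl (by have := ht.2; intro h; linarith [sub_eq_zero.1 h]))).comp
        ((continuous_const.sub continuous_id).continuousAt)
  have hχcontAt : ∀ u ∈ Set.Ioo (0:ℝ) 1, ContinuousAt χ u := by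
    intro u hu
    apply ContinuousAt.mul
    · exact Real.continuousAt_rpow_const u (c - 1) (Or.inl hu.1.ne')
    · exact (Real.continuousAt_rpow_const (1 - u) ((α + 1) - 1)
        (Or.inl (by have := hu.2; intro h; linarith [sub_eq_zero.1 h]))).comp
        ((continuous_const.sub continuous_id).continuousAt)
  have hφcontOn : ContinuousOn φ (Set.Ioo 0 1) :=
    fun t ht => (hφcontAt t ht).continuousWithinAt
  have hχcontOn : ContinuousOn χ (Set.Ioo 0 1) :=
    fun t ht => (hχcontAt t ht).continuousWithinAt
  have hFd : ∀ t ∈ Set.Ioo (0:ℝ) 1, HasDerivAt F (φ t) t := by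
    intro t ht
    exact intervalIntegral.integral_hasDerivAt_right
      (hφint.mono_set (hsub t (Set.Ioo_subset_Icc_self ht)))
      (hφcontOn.stronglyMeasurableAtFilter isOpen_Ioo t ht) (hφcontAt t ht)
  have hHd : ∀ u ∈ Set.Ioo (0:ℝ) 1, HasDerivAt H (χ u) u := by
    intro u hu
    exact intervalIntegral.integral_hasDerivAt_right
      (hχint.mono_set (hsub u (Set.Ioo_subset_Icc_self hu)))
      (hχcontOn.stronglyMeasurableAtFilter isOpen_Ioo u hu) (hχcontAt u hu)
  have hGd : ∀ t ∈ Set.Ioo (0:ℝ) 1, HasDerivAt G (χ (t ^ 4) * (4 * t ^ 3)) t := by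
    intro t ht
    have ht4 : t ^ 4 ∈ Set.Ioo (0:ℝ) 1 :=
      ⟨pow_pos ht.1 4, pow_lt_one₀ ht.1.le ht.2 (by norm_num)⟩
    have hpow : HasDerivAt (fun y : ℝ => y ^ 4) (4 * t ^ 3) t := by
      simpa using hasDerivAt_pow 4 t
    exact HasDerivAt.comp (h₂ := H) (h := fun y : ℝ => y ^ 4) t (hHd _ ht4) hpow
  have hγτ : ∀ t ∈ Set.Ioo (0:ℝ) 1, χ (t ^ 4) * (4 * t ^ 3) = 4 * τ t := by
    intro t ht
    have ht0 : 0 < t := ht.1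
    have e0 : (α + 1) - 1 = α := by ring
    have e1 : ((t:ℝ) ^ 4) ^ (c - 1) = t ^ (4 * (c - 1)) := by
      rw [← Real.rpow_natCast t 4, ← Real.rpow_mul ht0.le]
      norm_num
    have e3 : t ^ (4 * (c - 1)) * t ^ ((3:ℕ):ℝ) = t ^ (2 * p - 4 * α - 5) := by
      rw [← Real.rpow_add ht0]
      congr 1
      rw [hcdef]
      push_cast
      ring
    calc χ (t ^ 4) * (4 * t ^ 3)
        = (t ^ (4 * (c - 1)) * t ^ ((3:ℕ):ℝ)) * (1 - t ^ 4) ^ α * 4 := by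
          rw [show χ (t ^ 4) = (t ^ 4) ^ (c - 1) * (1 - t ^ 4) ^ ((α + 1) - 1) from rfl,
            e0, e1, Real.rpow_natCast t 3]
          ring
      _ = 4 * τ t := by rw [e3]; simp only [hτdef]; ring
  have hτcont : Continuous (fun t : ℝ => (1 - t ^ 4) ^ α) :=
    (continuous_rpow_const_of_nonneg hα).comp (by continuity)
  have hτint : IntervalIntegrable τ volume 0 1 :=
    IntervalIntegrable.mul_continuousOn
      (intervalIntegral.intervalIntegrable_rpow' he) hτcont.continuousOn
  have hτcontAt : ∀ t ∈ Set.Ioo (0:ℝ) 1, ContinuousAt τ t := by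
    intro t ht
    exact (Real.continuousAt_rpow_const t _ (Or.inl ht.1.ne')).mul hτcont.continuousAt
  have hψGint : IntervalIntegrable (fun t => φ t * G t) volume 0 1 :=
    hφint.mul_continuousOn (by rw [Set.uIcc_of_le zero_le_one]; exact hGcont)
  have hFτint : IntervalIntegrable (fun t => F t * τ t) volume 0 1 :=
    hτint.continuousOn_mul (by rw [Set.uIcc_of_le zero_le_one]; exact hFcont)
  set L : ℝ → ℝ := fun t => ∫ u in (0:ℝ)..t, φ u * G u with hLdef
  set R : ℝ → ℝ := fun t => F t * G t - 4 * ∫ u in (0:ℝ)..t, F u * τ u with hRdef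
  have hLd : ∀ t ∈ Set.Ioo (0:ℝ) 1, HasDerivAt L (φ t * G t) t := by
    intro t ht
    apply intervalIntegral.integral_hasDerivAt_right
      (hψGint.mono_set (hsub t (Set.Ioo_subset_Icc_self ht)))
      ((ContinuousOn.stronglyMeasurableAtFilter isOpen_Ioo ?_) t ht)
      ((hφcontAt t ht).mul (hGd t ht).continuousAt)
    exact hφcontOn.mul (fun u hu => (hGd u hu).continuousAt.continuousWithinAt)
  have hRd : ∀ t ∈ Set.Ioo (0:ℝ) 1, HasDerivAt R (φ t * G t) t := by
    intro t ht
    have h1 := (hFd t ht).mul (hGd t ht)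
    have h2 : HasDerivAt (fun w => ∫ u in (0:ℝ)..w, F u * τ u) (F t * τ t) t := by
      apply intervalIntegral.integral_hasDerivAt_right
        (hFτint.mono_set (hsub t (Set.Ioo_subset_Icc_self ht)))
        ((ContinuousOn.stronglyMeasurableAtFilter isOpen_Ioo ?_) t ht)
        (((hFd t ht).continuousAt).mul (hτcontAt t ht))
      exact ContinuousOn.mul (fun u hu => (hFd u hu).continuousAt.continuousWithinAt)
        (fun u hu => (hτcontAt u hu).continuousWithinAt)
    have h3 := h1.sub (h2.const_mul 4)
    refine h3.congr_deriv ?_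
    rw [hγτ t ht]
    ring
  have hLcont : ContinuousOn L (Set.Icc 0 1) := by
    have := intervalIntegral.continuousOn_primitive_interval' hψGint
      (Set.left_mem_uIcc (a := (0:ℝ)) (b := 1))
    rwa [Set.uIcc_of_le zero_le_one] at this
  have hRcont : ContinuousOn R (Set.Icc 0 1) := by
    apply (hFcont.mul hGcont).sub
    apply ContinuousOn.mul continuousOn_const
    have := intervalIntegral.continuousOn_primitive_interval' hFτint
      (Set.left_mem_uIcc (a := (0:ℝ)) (b := 1))
    rwa [Set.uIcc_of_le zero_le_one] at this
  have hDd : ∀ t ∈ Set.Ioo (0:ℝ) 1, HasDerivAt (fun u => L u - R u) 0 t := by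
    intro t ht
    have := (hLd t ht).sub (hRd t ht)
    exact this.congr_deriv (sub_self _)
  have hDcont : ContinuousOn (fun u => L u - R u) (Set.Icc 0 1) := hLcont.sub hRcont
  have hdiff : DifferentiableOn ℝ (fun u => L u - R u) (interior (Set.Icc (0:ℝ) 1)) := by
    intro t ht
    rw [interior_Icc] at ht
    exact (hDd t ht).differentiableAt.differentiableWithinAt
  have h01 : (0:ℝ) ∈ Set.Icc (0:ℝ) 1 := ⟨le_refl 0, zero_le_one⟩
  have h11 : (1:ℝ) ∈ Set.Icc (0:ℝ) 1 := ⟨zero_le_one, le_refl 1⟩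
  have hmon := monotoneOn_of_deriv_nonneg (convex_Icc 0 1) hDcont hdiff
    (fun t ht => by rw [interior_Icc] at ht; rw [(hDd t ht).deriv])
  have hant := antitoneOn_of_deriv_nonpos (convex_Icc 0 1) hDcont hdiff
    (fun t ht => by rw [interior_Icc] at ht; rw [(hDd t ht).deriv])
  have hD0 : L 0 - R 0 = 0 := by
    have hL0 : (∫ u in (0:ℝ)..0, φ u * G u) = 0 := intervalIntegral.integral_same
    have hF0 : F 0 = 0 := intervalIntegral.integral_same
    have hI0 : (∫ u in (0:ℝ)..0, F u * τ u) = 0 := intervalIntegral.integral_same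
    rw [hLdef, hRdef]
    simp only []
    rw [hL0, hF0, hI0]
    ring
  have hkey : L 1 = R 1 := by
    have ha := hmon h01 h11 zero_le_one
    have hb := hant h01 h11 zero_le_one
    have hc : L 1 - R 1 = L 0 - R 0 := le_antisymm hb ha
    linarith
  -- identify L 1 and R 1 with the statement
  have hψφ : ∀ t : ℝ, psiFn α p t = φ t := by
    intro t
    show t ^ (x - 1) * (1 - t) ^ (-x) = t ^ (x - 1) * (1 - t) ^ ((1 - x) - 1)
    rw [show (1 - x) - 1 = -x by ring]
  have hGb : ∀ t : ℝ, betaInc (t ^ 4) c (α + 1) = G t := fun t => rfl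
  have hLHS : (∫ t in (0:ℝ)..1, psiFn α p t * betaInc (t ^ 4) c (α + 1)) = L 1 := by
    rw [hLdef]
    apply intervalIntegral.integral_congr
    intro t _
    show psiFn α p t * betaInc (t ^ 4) c (α + 1) = φ t * G t
    rw [hψφ t, hGb t]
  have hF1 : F 1 = betaFn x (1 - x) := rfl
  have hG1 : G 1 = betaFn c (α + 1) := by
    rw [hGdef]
    show H ((1:ℝ) ^ 4) = betaFn c (α + 1)
    rw [one_pow]
    rfl
  have hR1 : R 1 = betaFn x (1 - x) * betaFn c (α + 1)
      - 4 * ∫ t in (0:ℝ)..1, F t * τ t := by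
    rw [hRdef]
    simp only []
    rw [hF1, hG1]
  rw [hLHS, hkey, hR1]


lemma betaFn_pos {x y : ℝ} (hx : 0 < x) (hy : 0 < y) : 0 < betaFn x y := by
  apply intervalIntegral.intervalIntegral_pos_of_pos_on (betaIntegrable hx hy) _ one_pos
  intro t ht
  have h1 : 0 < t := ht.1
  have h2 : 0 < 1 - t := by linarith [ht.2]
  positivity

lemma Kfun_eq (α p : ℝ) (hα : 0 ≤ α) (hp1 : 2 + 2 * α < p) {t : ℝ}
    (ht0 : 0 ≤ t) (ht1 : t ≤ 1) :
    Kfun α p 0 t = 1 / 2 * betaInc (t ^ 4) ((p - 2 * α - 2) / 2) (α + 1) := by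
  have hc0 : 0 < (p - 2 * α - 2) / 2 := by linarith
  have ht4 : 0 ≤ t ^ 4 := by positivity
  have ht41 : t ^ 4 ≤ 1 := pow_le_one₀ ht0 ht1
  rw [Kfun, betaInc_series α hα hc0 ht4 ht41, ← tsum_mul_left]
  apply tsum_congr
  intro k
  have hck : 0 < (p - 2 * α - 2) / 2 + (k : ℝ) := by
    have := Nat.cast_nonneg (α := ℝ) k; linarith
  have hmax : max ((0:ℝ) ^ 2) (t ^ 2) = t ^ 2 := max_eq_right (by simpa using sq_nonneg t)
  have hexp : p - 2 * α - 2 + 2 * (k : ℝ) = ((2:ℕ):ℝ) * ((p - 2 * α - 2) / 2 + (k:ℝ)) := by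
    push_cast; ring
  have hpow : (t ^ 2 : ℝ) ^ (p - 2 * α - 2 + 2 * (k : ℝ))
      = (t ^ 4) ^ ((p - 2 * α - 2) / 2 + (k:ℝ)) := by
    rw [show (t:ℝ) ^ 4 = (t ^ 2) ^ 2 by ring, ← Real.rpow_natCast (t ^ 2) 2,
      ← Real.rpow_mul (sq_nonneg t), hexp]
  rw [hmax, hpow]
  rw [show p - 2 * α - 2 + 2 * (k : ℝ) = 2 * ((p - 2 * α - 2) / 2 + (k:ℝ)) by ring]
  field_simp

lemma S_eq (α p : ℝ) (hα : 0 ≤ α) (hp1 : 2 + 2 * α < p) :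
    (∑' k : ℕ, gBinom α k * (-1) ^ k / (p - 2 * α - 2 + 2 * (k:ℝ)))
      = 1 / 2 * betaFn ((p - 2 * α - 2) / 2) (α + 1) := by
  have hc0 : 0 < (p - 2 * α - 2) / 2 := by linarith
  have hBI : betaFn ((p - 2 * α - 2) / 2) (α + 1)
      = betaInc 1 ((p - 2 * α - 2) / 2) (α + 1) := rfl
  rw [hBI, betaInc_series α hα hc0 zero_le_one le_rfl, ← tsum_mul_left]
  apply tsum_congr
  intro k
  have hck : 0 < (p - 2 * α - 2) / 2 + (k : ℝ) := by
    have := Nat.cast_nonneg (α := ℝ) k; linarith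
  rw [Real.one_rpow]
  rw [show p - 2 * α - 2 + 2 * (k : ℝ) = 2 * ((p - 2 * α - 2) / 2 + (k:ℝ)) by ring]
  field_simp

theorem condition_equivalences (α p : ℝ) (hα : 0 ≤ α)
    (hp1 : 2 + 2 * α < p) (hp2 : p < 2 * (2 + α)) :
    ((betaFn ((2 + α) / p) (1 - (2 + α) / p) * Hfun α p 0
        - (∫ t in (0:ℝ)..1, psiFn α p t * Kfun α p 0 t) ≤ 0) ↔
      (betaFn ((2 + α) / p) (1 - (2 + α) / p) *
          (1 / 2 * betaFn ((p - 2 * α - 2) / 2) (α + 1) - 1 / (2 * (α + 1)))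
        - 1 / 2 * (∫ t in (0:ℝ)..1,
            psiFn α p t * betaInc (t ^ 4) ((p - 2 * α - 2) / 2) (α + 1)) ≤ 0)) ∧
    ((betaFn ((2 + α) / p) (1 - (2 + α) / p) *
          (1 / 2 * betaFn ((p - 2 * α - 2) / 2) (α + 1) - 1 / (2 * (α + 1)))
        - 1 / 2 * (∫ t in (0:ℝ)..1,
            psiFn α p t * betaInc (t ^ 4) ((p - 2 * α - 2) / 2) (α + 1)) ≤ 0) ↔
      ((∫ t in (0:ℝ)..1, betaReg t ((2 + α) / p) (1 - (2 + α) / p) *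
            t ^ (2 * p - 4 * α - 5) * (1 - t ^ 4) ^ α)
        - 1 / (4 * (α + 1)) ≤ 0)) := by
  have hp0 : 0 < p := by linarith
  have hx0 : 0 < (2 + α) / p := div_pos (by linarith) hp0
  have hy0 : 0 < 1 - (2 + α) / p := by
    have : (2 + α) / p < 1 := (div_lt_one hp0).2 (by linarith)
    linarith
  have hB1 : 0 < betaFn ((2 + α) / p) (1 - (2 + α) / p) := betaFn_pos hx0 hy0
  have hH0 : Hfun α p 0 = 1 / 2 * betaFn ((p - 2 * α - 2) / 2) (α + 1) - 1 / (2 * (α + 1)) := by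
    rw [Hfun, S_eq α p hα hp1]
    norm_num
  have hIK : (∫ t in (0:ℝ)..1, psiFn α p t * Kfun α p 0 t)
      = 1 / 2 * (∫ t in (0:ℝ)..1,
          psiFn α p t * betaInc (t ^ 4) ((p - 2 * α - 2) / 2) (α + 1)) := by
    rw [← intervalIntegral.integral_const_mul]
    apply intervalIntegral.integral_congr
    intro t ht
    rw [Set.uIcc_of_le zero_le_one] at ht
    show psiFn α p t * Kfun α p 0 t
      = 1 / 2 * (psiFn α p t * betaInc (t ^ 4) ((p - 2 * α - 2) / 2) (α + 1))
    rw [Kfun_eq α p hα hp1 ht.1 ht.2]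
    ring
  constructor
  · rw [hH0, hIK]
  · have hibp := ibp_key α p hα hp1 hp2
    have hreg : (∫ t in (0:ℝ)..1, betaReg t ((2 + α) / p) (1 - (2 + α) / p) *
          t ^ (2 * p - 4 * α - 5) * (1 - t ^ 4) ^ α)
        = (∫ t in (0:ℝ)..1, betaInc t ((2 + α) / p) (1 - (2 + α) / p) *
            (t ^ (2 * p - 4 * α - 5) * (1 - t ^ 4) ^ α)) /
          betaFn ((2 + α) / p) (1 - (2 + α) / p) := by
      rw [← intervalIntegral.integral_div]
      apply intervalIntegral.integral_congr
      intro t _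
      show betaReg t ((2 + α) / p) (1 - (2 + α) / p) * t ^ (2 * p - 4 * α - 5) *
          (1 - t ^ 4) ^ α = _
      rw [betaReg]
      ring
    set I := ∫ t in (0:ℝ)..1, betaInc t ((2 + α) / p) (1 - (2 + α) / p) *
        (t ^ (2 * p - 4 * α - 5) * (1 - t ^ 4) ^ α) with hIdef
    set B1 := betaFn ((2 + α) / p) (1 - (2 + α) / p) with hB1def
    set B2 := betaFn ((p - 2 * α - 2) / 2) (α + 1) with hB2def
    have hα1 : (0:ℝ) < α + 1 := by linarith
    have hbc : B1 * (1 / 2 * B2 - 1 / (2 * (α + 1)))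
        - 1 / 2 * (∫ t in (0:ℝ)..1,
            psiFn α p t * betaInc (t ^ 4) ((p - 2 * α - 2) / 2) (α + 1))
        = (2 * B1) * ((∫ t in (0:ℝ)..1, betaReg t ((2 + α) / p) (1 - (2 + α) / p) *
            t ^ (2 * p - 4 * α - 5) * (1 - t ^ 4) ^ α) - 1 / (4 * (α + 1))) := by
      rw [hibp, hreg]
      field_simp
      ring
    rw [hbc]
    constructor
    · intro h
      by_contra hcon
      push_neg at hcon
      nlinarith
    · intro h
      exact mul_nonpos_of_nonneg_of_nonpos (by positivity) h
end

section
/- Let x ≥ 1 and 0 < y ≤ 1. Then B(x,y) ≤ 1/x + 1/y − 1. -/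
open MeasureTheory intervalIntegral

theorem beta_upper_bound (x y : ℝ) (hx : 1 ≤ x) (hy0 : 0 < y) (hy1 : y ≤ 1) :
    betaFn x y ≤ 1 / x + 1 / y - 1 := by
  have hx0 : (0:ℝ) < x := lt_of_lt_of_le one_pos hx
  have hf : IntervalIntegrable (fun t : ℝ => t ^ (x - 1)) volume 0 1 :=
    intervalIntegral.intervalIntegrable_rpow' (by linarith)
  have hg : IntervalIntegrable (fun t : ℝ => (1 - t) ^ (y - 1)) volume 0 1 := by
    have := ((intervalIntegral.intervalIntegrable_rpow' (r := y - 1) (by linarith)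
      (a := 0) (b := 1)).comp_sub_left 1).symm
    simpa using this
  have hm1 : Measurable (fun s : ℝ => s ^ (x - 1)) := by measurability
  have hm2 : Measurable (fun s : ℝ => s ^ (y - 1)) := by measurability
  have hmeas : Measurable (fun t : ℝ => t ^ (x - 1) * (1 - t) ^ (y - 1)) :=
    hm1.mul (hm2.comp (measurable_const.sub measurable_id))
  have hfg : IntervalIntegrable (fun t : ℝ => t ^ (x - 1) * (1 - t) ^ (y - 1)) volume 0 1 := by
    apply hg.mono_fun hmeas.aestronglyMeasurable
    filter_upwards [MeasureTheory.ae_restrict_mem measurableSet_Ioc] with t ht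
    rw [Set.uIoc_of_le (by norm_num : (0:ℝ) ≤ 1)] at ht
    have ha0 : (0:ℝ) ≤ t ^ (x - 1) := Real.rpow_nonneg ht.1.le _
    have ha1 : t ^ (x - 1) ≤ 1 := Real.rpow_le_one ht.1.le ht.2 (by linarith)
    have hb0 : (0:ℝ) ≤ (1 - t) ^ (y - 1) := Real.rpow_nonneg (by linarith [ht.2]) _
    simp only [Real.norm_eq_abs, abs_of_nonneg hb0, abs_of_nonneg (mul_nonneg ha0 hb0)]
    nlinarith
  have key : betaFn x y ≤ ∫ t in (0:ℝ)..1, (t ^ (x - 1) + (1 - t) ^ (y - 1) - 1) := by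
    apply intervalIntegral.integral_mono_on (by norm_num) hfg
      ((hf.add hg).sub (intervalIntegrable_const))
    intro t ht
    rcases eq_or_lt_of_le ht.2 with h1 | h1
    · subst h1
      simp [Real.one_rpow]
    · have ha0 : (0:ℝ) ≤ t ^ (x - 1) := Real.rpow_nonneg ht.1 _
      have ha1 : t ^ (x - 1) ≤ 1 := Real.rpow_le_one ht.1 ht.2 (by linarith)
      have hb1 : (1:ℝ) ≤ (1 - t) ^ (y - 1) :=
        Real.one_le_rpow_of_pos_of_le_one_of_nonpos (by linarith) (by linarith [ht.1])
          (by linarith)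
      nlinarith
  have hIf : (∫ t in (0:ℝ)..1, t ^ (x - 1)) = 1 / x := by
    rw [integral_rpow (Or.inl (by linarith : (-1:ℝ) < x - 1))]
    rw [Real.one_rpow, Real.zero_rpow (by linarith : x - 1 + 1 ≠ 0)]
    rw [show x - 1 + 1 = x by ring]; ring
  have hIg : (∫ t in (0:ℝ)..1, (1 - t) ^ (y - 1)) = 1 / y := by
    have := intervalIntegral.integral_comp_sub_left (fun s : ℝ => s ^ (y - 1)) 1 (a := 0) (b := 1)
    simp only [sub_self, sub_zero] at this
    rw [this, integral_rpow (Or.inl (by linarith : (-1:ℝ) < y - 1))]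
    rw [Real.one_rpow, Real.zero_rpow (by linarith : y - 1 + 1 ≠ 0)]
    rw [show y - 1 + 1 = y by ring]; ring
  calc betaFn x y ≤ _ := key
    _ = 1 / x + 1 / y - 1 := by
        rw [intervalIntegral.integral_sub (hf.add hg) intervalIntegrable_const,
          intervalIntegral.integral_add hf hg, hIf, hIg]
        simp
end

section
/- Let x ≥ 1 and 0 < y ≤ 1. Then B(x,y) ≥ (1/(xy)) · (x+y)/(1+xy). -/
open MeasureTheory intervalIntegral

section BetaAux
open Set

lemma myContRpow {p : ℝ} (hp : 0 ≤ p) : Continuous fun x : ℝ => x ^ p :=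
  continuous_iff_continuousAt.mpr fun x => Real.continuousAt_rpow_const x p (Or.inr hp)

lemma myBern {t p : ℝ} (ht1 : t ≤ 1) (hp0 : 0 ≤ p) (hp1 : p ≤ 1) :
    (1 - t) ^ p ≤ 1 - p * t := by
  have := rpow_one_add_le_one_add_mul_self (s := -t) (by linarith) hp0 hp1
  rw [← sub_eq_add_neg] at this
  linarith

lemma myBernInv {t y : ℝ} (ht0 : 0 ≤ t) (ht1 : t < 1) (hy0 : 0 < y) (hy1 : y ≤ 1) :
    1 + (1 - y) * t ≤ (1 - t) ^ (y - 1) := by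
  have h1t : (0:ℝ) < 1 - t := by linarith
  set s := (1 - t) ^ (1 - y) with hsdef
  have hs : s ≤ 1 - (1 - y) * t := myBern (by linarith) (by linarith) (by linarith)
  have hspos : (0:ℝ) < s := Real.rpow_pos_of_pos h1t _
  have he : (1 - t) ^ (y - 1) = s⁻¹ := by
    rw [hsdef, ← Real.rpow_neg h1t.le]; norm_num
  have h2 : (1 + (1 - y) * t) * s ≤ 1 := by nlinarith [sq_nonneg ((1 - y) * t)]
  have h3 := mul_le_mul_of_nonneg_right h2 (inv_pos.mpr hspos).le
  rw [mul_assoc, mul_inv_cancel₀ hspos.ne', mul_one, one_mul] at h3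
  rw [he]; exact h3

lemma myQuad {y : ℝ} (hy0 : 0 < y) (hy1 : y ≤ 1) {t : ℝ} (ht : t ∈ Icc (0:ℝ) 1) :
    (1 - t) ^ y ≤ 1 - y * t - y * (1 - y) / 2 * t ^ 2 := by
  set F : ℝ → ℝ := fun t => 1 - y * t - y * (1 - y) / 2 * t ^ 2 - (1 - t) ^ y with hF
  have hcont : ContinuousOn F (Icc 0 1) := by
    apply ContinuousOn.sub
    · fun_prop
    · exact ((myContRpow hy0.le).comp (continuous_const.sub continuous_id)).continuousOn
  have hderiv : ∀ x ∈ Ioo (0:ℝ) 1, HasDerivAt F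
      (-(y) - y * (1 - y) / 2 * (2 * x) + y * (1 - x) ^ (y - 1)) x := by
    intro x hx
    have h1 : HasDerivAt (fun u : ℝ => 1 - u) (-1) x := by
      simpa using (hasDerivAt_id x).const_sub 1
    have h2 : HasDerivAt (fun u : ℝ => (1 - u) ^ y) (-1 * y * (1 - x) ^ (y - 1)) x :=
      h1.rpow_const (Or.inl (sub_ne_zero.mpr (ne_of_gt hx.2)))
    have h3 : HasDerivAt (fun u : ℝ => 1 - y * u - y * (1 - y) / 2 * u ^ 2)
        (-(y) - y * (1 - y) / 2 * (2 * x)) x := by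
      have ha : HasDerivAt (fun u : ℝ => y * u) y x := by simpa using (hasDerivAt_id x).const_mul y
      have hb : HasDerivAt (fun u : ℝ => y * (1 - y) / 2 * u ^ 2)
          (y * (1 - y) / 2 * (2 * x)) x := by
        have := (hasDerivAt_pow 2 x).const_mul (y * (1 - y) / 2)
        simpa using this
      have h4 := ((hasDerivAt_const x (1:ℝ)).sub ha).sub hb
      simp only [zero_sub] at h4
      exact h4
    have := h3.sub h2
    exact this.congr_deriv (by ring)
  have hmono : MonotoneOn F (Icc 0 1) := by
    apply monotoneOn_of_deriv_nonneg (convex_Icc 0 1) hcont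
    · intro x hx
      rw [interior_Icc] at hx
      exact ((hderiv x hx).differentiableAt).differentiableWithinAt
    · intro x hx
      rw [interior_Icc] at hx
      rw [(hderiv x hx).deriv]
      have hb := myBernInv hx.1.le hx.2 hy0 hy1
      nlinarith [mul_le_mul_of_nonneg_left hb hy0.le, hx.1, hx.2]
  have h0 : F 0 = 0 := by simp [hF]
  have := hmono (left_mem_Icc.mpr zero_le_one) ht ht.1
  rw [h0] at this
  simp only [hF] at this
  linarith

lemma myIntRpow {c : ℝ} (hc : -1 < c) : ∫ t in (0:ℝ)..1, t ^ c = 1 / (c + 1) := by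
  rw [integral_rpow (Or.inl hc), Real.one_rpow, Real.zero_rpow (by linarith)]
  ring

lemma myIntOneSub {y : ℝ} (hy : -1 < y) : ∫ t in (0:ℝ)..1, (1 - t) ^ y = 1 / (y + 1) := by
  have h := intervalIntegral.integral_comp_sub_left (a := 0) (b := 1) (fun s : ℝ => s ^ y) 1
  norm_num at h
  rw [h]
  exact myIntRpow hy


lemma myAlg {a y : ℝ} (ha0 : 0 ≤ a) (ha1 : a ≤ 1) (hy0 : 0 < y) (hy1 : y ≤ 1) :
    1 / ((1 + a) * (1 + (1 + a) * y)) ≤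
      1 / (y + 1) - (1 - y / 2 - y * (1 - y) / 6)
        + (1 / (a + 1) - y / (a + 2) - y * (1 - y) / (2 * (a + 3))) := by
  have hS : (0:ℝ) ≤ 11 - 5*y + 2*y^2 + 15*a - 13*a*y + 5*a*y^2 + 4*a^2 - 10*a^2*y
      + 4*a^2*y^2 - 2*a^3*y + a^3*y^2 := by
    nlinarith [mul_nonneg ha0 hy0.le, mul_nonneg (mul_nonneg ha0 ha0) hy0.le,
      mul_nonneg (mul_nonneg (mul_nonneg ha0 ha0) ha0) hy0.le, sq_nonneg (1-y), sq_nonneg a,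
      mul_nonneg ha0 (sq_nonneg (1-y)), mul_nonneg (mul_nonneg ha0 ha0) (sq_nonneg (1-y)),
      mul_nonneg (mul_nonneg (mul_nonneg ha0 ha0) ha0) (sq_nonneg (1-y)),
      mul_le_one₀ ha1 ha0 ha1]
  rw [← sub_nonneg]
  have hd : (0:ℝ) < 6*(y+1)*(a+1)*(a+2)*(a+3)*(1+(1+a)*y) := by positivity
  have key : 1 / (y + 1) - (1 - y / 2 - y * (1 - y) / 6)
        + (1 / (a + 1) - y / (a + 2) - y * (1 - y) / (2 * (a + 3)))
        - 1 / ((1 + a) * (1 + (1 + a) * y))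
      = a*y*(1-y)*(11 - 5*y + 2*y^2 + 15*a - 13*a*y + 5*a*y^2 + 4*a^2 - 10*a^2*y
        + 4*a^2*y^2 - 2*a^3*y + a^3*y^2) / (6*(y+1)*(a+1)*(a+2)*(a+3)*(1+(1+a)*y)) := by
    field_simp
    ring
  rw [key]
  apply div_nonneg _ hd.le
  have : (0:ℝ) ≤ a * y * (1 - y) := by
    apply mul_nonneg (mul_nonneg ha0 hy0.le); linarith
  exact mul_nonneg this hS

lemma myBase {a y : ℝ} (ha0 : 0 ≤ a) (ha1 : a ≤ 1) (hy0 : 0 < y) (hy1 : y ≤ 1) :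
    1 / ((1 + a) * (1 + (1 + a) * y)) ≤ ∫ t in (0:ℝ)..1, t ^ a * (1 - t) ^ y := by
  have hc1 : Continuous fun t : ℝ => (1 - t) ^ y :=
    (myContRpow hy0.le).comp (continuous_const.sub continuous_id)
  have hIa : IntervalIntegrable (fun t : ℝ => t ^ a) volume 0 1 :=
    intervalIntegrable_rpow' (by linarith)
  have hIa1 : IntervalIntegrable (fun t : ℝ => t ^ (a+1)) volume 0 1 :=
    intervalIntegrable_rpow' (by linarith)
  have hIa2 : IntervalIntegrable (fun t : ℝ => t ^ (a+2)) volume 0 1 :=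
    intervalIntegrable_rpow' (by linarith)
  have hUc : Continuous fun t : ℝ => 1 - y * t - y * (1 - y) / 2 * t ^ 2 := by fun_prop
  have hf_int : IntervalIntegrable (fun t : ℝ => t ^ a * (1 - t) ^ y) volume 0 1 :=
    hIa.mul_continuousOn hc1.continuousOn
  have hg_int : IntervalIntegrable
      (fun t : ℝ => (1 - t) ^ y - (1 - t ^ a) * (1 - y * t - y * (1 - y) / 2 * t ^ 2))
      volume 0 1 :=
    (hc1.intervalIntegrable 0 1).sub
      (((_root_.intervalIntegrable_const (c := (1:ℝ))).sub hIa).mul_continuousOn hUc.continuousOn)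
  have hmono : (∫ t in (0:ℝ)..1,
        ((1 - t) ^ y - (1 - t ^ a) * (1 - y * t - y * (1 - y) / 2 * t ^ 2)))
      ≤ ∫ t in (0:ℝ)..1, t ^ a * (1 - t) ^ y := by
    apply intervalIntegral.integral_mono_on zero_le_one hg_int hf_int
    intro t ht
    have h1 : t ^ a ≤ 1 := Real.rpow_le_one ht.1 ht.2 ha0
    have h2 : (1 - t) ^ y ≤ 1 - y * t - y * (1 - y) / 2 * t ^ 2 := myQuad hy0 hy1 ht
    nlinarith [mul_nonneg (sub_nonneg.mpr h1) (sub_nonneg.mpr h2)]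
  have hval : (∫ t in (0:ℝ)..1,
        ((1 - t) ^ y - (1 - t ^ a) * (1 - y * t - y * (1 - y) / 2 * t ^ 2)))
      = 1 / (y + 1) - (1 - y / 2 - y * (1 - y) / 6)
        + (1 / (a + 1) - y / (a + 2) - y * (1 - y) / (2 * (a + 3))) := by
    have hexp : EqOn
        (fun t : ℝ => (1 - t) ^ y - (1 - t ^ a) * (1 - y * t - y * (1 - y) / 2 * t ^ 2))
        (fun t : ℝ => ((1 - t) ^ y - (1 - y * t - y * (1 - y) / 2 * t ^ 2))
          + (t ^ a - y * t ^ (a+1) - y * (1 - y) / 2 * t ^ (a+2))) (Set.uIcc (0:ℝ) 1) := by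
      intro t ht
      rw [Set.uIcc_of_le zero_le_one] at ht
      rcases eq_or_lt_of_le ht.1 with h0 | h0
      · rw [← h0]
        simp [Real.zero_rpow (show a + 1 ≠ 0 by positivity),
          Real.zero_rpow (show a + 2 ≠ 0 by positivity)]
      · have e1 : t ^ (a+1) = t ^ a * t := by rw [Real.rpow_add h0, Real.rpow_one]
        have e2 : t ^ (a+2) = t ^ a * t ^ 2 := by
          rw [Real.rpow_add h0, show ((2:ℝ)) = ((2:ℕ):ℝ) by norm_num, Real.rpow_natCast]
        simp only [e1, e2]
        ring
    rw [intervalIntegral.integral_congr hexp]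
    have hi1 : IntervalIntegrable (fun t : ℝ => (1 - t) ^ y) volume 0 1 :=
      hc1.intervalIntegrable 0 1
    have hi2 : IntervalIntegrable (fun t : ℝ => 1 - y * t - y * (1 - y) / 2 * t ^ 2) volume 0 1 :=
      hUc.intervalIntegrable 0 1
    rw [intervalIntegral.integral_add (hi1.sub hi2)
      ((hIa.sub (hIa1.const_mul y)).sub (hIa2.const_mul (y * (1 - y) / 2))),
      intervalIntegral.integral_sub hi1 hi2,
      intervalIntegral.integral_sub (hIa.sub (hIa1.const_mul y)) (hIa2.const_mul (y * (1 - y) / 2)),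
      intervalIntegral.integral_sub hIa (hIa1.const_mul y),
      intervalIntegral.integral_const_mul, intervalIntegral.integral_const_mul]
    have hv2 : (∫ t in (0:ℝ)..1, (1 - y * t - y * (1 - y) / 2 * t ^ 2))
        = 1 - y / 2 - y * (1 - y) / 6 := by
      rw [intervalIntegral.integral_sub ((_root_.intervalIntegrable_const).sub
          ((intervalIntegral.intervalIntegrable_id).const_mul y))
          ((intervalIntegral.intervalIntegrable_pow 2).const_mul (y * (1 - y) / 2)),
        intervalIntegral.integral_sub intervalIntegrable_const
          ((intervalIntegral.intervalIntegrable_id).const_mul y),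
        intervalIntegral.integral_const_mul, intervalIntegral.integral_const_mul,
        integral_pow, integral_id, intervalIntegral.integral_const]
      norm_num
      ring
    rw [hv2, myIntOneSub (by linarith), myIntRpow (by linarith),
      myIntRpow (show (-1:ℝ) < a + 1 by linarith), myIntRpow (show (-1:ℝ) < a + 2 by linarith)]
    have hne1 : y + 1 ≠ 0 := by positivity
    have hne2 : a + 1 ≠ 0 := by positivity
    have hne3 : a + 2 ≠ 0 := by positivity
    have hne4 : a + 3 ≠ 0 := by positivity
    field_simp
    ring
  rw [hval] at hmono
  exact le_trans (myAlg ha0 ha1 hy0 hy1) hmono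

lemma betaFn_eq_complex {x y : ℝ} (hx : 0 < x) (hy : 0 < y) :
    (betaFn x y : ℂ) = Complex.betaIntegral x y := by
  rw [betaFn, Complex.betaIntegral, ← intervalIntegral.integral_ofReal]
  refine intervalIntegral.integral_congr fun t ht => ?_
  rw [Set.uIcc_of_le (by norm_num : (0:ℝ) ≤ 1)] at ht
  rw [Complex.ofReal_mul, Complex.ofReal_cpow ht.1,
    Complex.ofReal_cpow (by linarith [ht.2] : (0:ℝ) ≤ 1 - t)]
  push_cast
  ring

lemma betaFn_rec1 {x y : ℝ} (hx : 0 < x) (hy : 0 < y) :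
    x * betaFn x (y + 1) = y * betaFn (x + 1) y := by
  have h := Complex.betaIntegral_recurrence (u := (x:ℂ)) (v := (y:ℂ)) (by simpa) (by simpa)
  have h1 := betaFn_eq_complex hx (by linarith : (0:ℝ) < y + 1)
  have h2 := betaFn_eq_complex (by linarith : (0:ℝ) < x + 1) hy
  push_cast at h1 h2
  rw [← h1, ← h2] at h
  exact_mod_cast h

lemma betaFn_integrable {x y : ℝ} (hx : 1 ≤ x) (hy : 0 < y) :
    IntervalIntegrable (fun t : ℝ => t ^ (x - 1) * (1 - t) ^ (y - 1)) volume 0 1 := by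
  have h1 : IntervalIntegrable (fun t : ℝ => (1 - t) ^ (y - 1)) volume 0 1 := by
    have h0 : IntervalIntegrable (fun t : ℝ => t ^ (y - 1)) volume 0 1 :=
      intervalIntegrable_rpow' (by linarith)
    have := (h0.comp_sub_left 1)
    norm_num at this
    exact this.symm
  exact h1.continuousOn_mul (myContRpow (by linarith)).continuousOn

lemma betaFn_split {x y : ℝ} (hx : 1 ≤ x) (hy : 0 < y) :
    betaFn x y = betaFn (x + 1) y + betaFn x (y + 1) := by
  have hx0 : (0:ℝ) < x := by linarith
  unfold betaFn
  rw [← intervalIntegral.integral_add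
    (by simpa using betaFn_integrable (by linarith : 1 ≤ x + 1) hy)
    (by simpa using betaFn_integrable hx (by linarith : (0:ℝ) < y + 1))]
  refine intervalIntegral.integral_congr fun t ht => ?_
  rw [Set.uIcc_of_le (by norm_num : (0:ℝ) ≤ 1)] at ht
  have e1 : t ^ (x + 1 - 1) = t ^ (x - 1) * t := by
    rcases eq_or_lt_of_le ht.1 with h0 | h0
    · rw [← h0, Real.zero_rpow (by linarith : x + 1 - 1 ≠ 0)]; ring
    · rw [show x + 1 - 1 = (x - 1) + 1 by ring, Real.rpow_add h0, Real.rpow_one]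
  have e2 : (1 - t) ^ (y + 1 - 1) = (1 - t) ^ (y - 1) * (1 - t) := by
    rcases eq_or_lt_of_le ht.2 with h0 | h0
    · rw [h0]
      norm_num [Real.zero_rpow (by linarith : y ≠ 0)]
    · have h1t : (0:ℝ) < 1 - t := by linarith
      rw [show y + 1 - 1 = (y - 1) + 1 by ring, Real.rpow_add h1t, Real.rpow_one]
  simp only [e1, e2]
  ring
lemma betaFn_rec_y {x y : ℝ} (hx : 1 ≤ x) (hy : 0 < y) :
    y * betaFn x y = (x + y) * betaFn x (y + 1) := by
  have hs := betaFn_split hx hy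
  have hr := betaFn_rec1 (by linarith : (0:ℝ) < x) hy
  linear_combination y * hs - hr

lemma betaFn_rec_x {x y : ℝ} (hx : 1 ≤ x) (hy : 0 < y) :
    x * betaFn x y = (x + y) * betaFn (x + 1) y := by
  have hs := betaFn_split hx hy
  have hr := betaFn_rec1 (by linarith : (0:ℝ) < x) hy
  linear_combination x * hs + hr

lemma myKey {x y : ℝ} (hx1 : 1 ≤ x) (hx2 : x ≤ 2) (hy0 : 0 < y) (hy1 : y ≤ 1) :
    1 / (x * y) * ((x + y) / (1 + x * y)) ≤ betaFn x y := by
  have hb : 1 / (x * (1 + x * y)) ≤ betaFn x (y + 1) := by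
    have h := myBase (a := x - 1) (by linarith) (by linarith) hy0 hy1
    have hxx : 1 + (x - 1) = x := by ring
    rw [hxx] at h
    have e : betaFn x (y + 1) = ∫ t in (0:ℝ)..1, t ^ (x - 1) * (1 - t) ^ y := by
      unfold betaFn; simp only [add_sub_cancel_right]
    rw [e]; exact h
  have hrec := betaFn_rec_y hx1 hy0
  have hxy : (0:ℝ) < x + y := by linarith
  have h2 : (x + y) * (1 / (x * (1 + x * y))) ≤ (x + y) * betaFn x (y + 1) :=
    mul_le_mul_of_nonneg_left hb hxy.le
  rw [← hrec] at h2
  have hx0 : x ≠ 0 := by positivity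
  have hyne : y ≠ 0 := ne_of_gt hy0
  have hdne : 1 + x * y ≠ 0 := by positivity
  have hxyne : x + y ≠ 0 := ne_of_gt hxy
  rw [show 1 / (x * y) * ((x + y) / (1 + x * y))
      = ((x + y) * (1 / (x * (1 + x * y)))) / y by
    rw [div_mul_div_comm, one_mul, mul_one_div, div_div,
      show x * y * (1 + x * y) = x * (1 + x * y) * y by ring]]
  rw [div_le_iff₀ hy0]
  nlinarith [h2]

lemma myMain : ∀ n : ℕ, ∀ x y : ℝ, 1 ≤ x → x ≤ 2 + n → 0 < y → y ≤ 1 →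
    1 / (x * y) * ((x + y) / (1 + x * y)) ≤ betaFn x y := by
  intro n
  induction n with
  | zero =>
    intro x y h1 h2 h3 h4
    exact myKey h1 (by norm_num at h2; linarith) h3 h4
  | succ n ih =>
    intro x y h1 h2 h3 h4
    by_cases hc : x ≤ 2
    · exact myKey h1 hc h3 h4
    · push_neg at hc
      have hx1 : 1 ≤ x - 1 := by linarith
      have ihx := ih (x - 1) y hx1 (by push_cast at h2 ⊢; linarith) h3 h4
      have hrec := betaFn_rec_x (x := x - 1) hx1 h3
      rw [sub_add_cancel] at hrec
      have h5 : (x - 1) * (1 / ((x - 1) * y) * ((x - 1 + y) / (1 + (x - 1) * y)))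
          ≤ (x - 1) * betaFn (x - 1) y := mul_le_mul_of_nonneg_left ihx (by linarith)
      rw [hrec] at h5
      have h6 : (x - 1) * (1 / ((x - 1) * y) * ((x - 1 + y) / (1 + (x - 1) * y)))
          = (x - 1 + y) * (1 / (y * (1 + (x - 1) * y))) := by
        have hne : x - 1 ≠ 0 := by intro h; rw [h] at hx1; norm_num at hx1
        field_simp
      have hpos : (0:ℝ) < x - 1 + y := by linarith
      have h7 : 1 / (y * (1 + (x - 1) * y)) ≤ betaFn x y := by
        rw [h6] at h5
        exact le_of_mul_le_mul_left h5 hpos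
      refine le_trans ?_ h7
      rw [show 1 / (x * y) * ((x + y) / (1 + x * y)) = (x + y) / (x * y * (1 + x * y)) by
        rw [div_mul_div_comm, one_mul]]
      rw [div_le_div_iff₀ (by positivity) (by positivity), one_mul]
      nlinarith [mul_nonneg (mul_nonneg (sq_nonneg y) (by linarith : (0:ℝ) ≤ x - 1))
        (by linarith : (0:ℝ) ≤ 1 - y)]


end BetaAux

theorem beta_lower_bound (x y : ℝ) (hx : 1 ≤ x) (hy0 : 0 < y) (hy1 : y ≤ 1) :
    betaFn x y ≥ 1 / (x * y) * ((x + y) / (1 + x * y)) := by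
  obtain ⟨n, hn⟩ := exists_nat_ge x
  exact myMain n x y hx (by push_cast; linarith) hy0 hy1
end

section
/- Let α ∈ [0,1] or α ∈ [2,3], and let 2 + 2α < p < 2(2+α). If 1/(2p−4α−4) − 1/((2p−4α−4)² B((2+α)/p, 2p−4α−4)) − α(1/(2p−4α) − 1/((2p−4α)² B((2+α)/p, 2p−4α))) + (α(α−1)/2)(1/(2p−4α+4) − 1/((2p−4α+4)² B((2+α)/p, 2p−4α+4))) − 1/(4(α+1)) ≤ 0, then condition (C) holds: ∫₀¹ I_t((2+α)/p, 1−(2+α)/p) t^{2p−4α−5}(1−t⁴)^α dt − 1/(4(α+1)) ≤ 0. -/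
open MeasureTheory intervalIntegral

open Set

lemma ofReal_beta_integrand {a b : ℝ} (t : ℝ) (ht : t ∈ Icc (0:ℝ) 1) :
    ((t ^ (a - 1) * (1 - t) ^ (b - 1) : ℝ) : ℂ)
      = (t : ℂ) ^ ((a : ℂ) - 1) * ((1 : ℂ) - t) ^ ((b : ℂ) - 1) := by
  rw [Complex.ofReal_mul, Complex.ofReal_cpow ht.1, Complex.ofReal_cpow (by linarith [ht.2] : (0:ℝ) ≤ 1 - t)]
  push_cast
  ring

lemma beta_integrand_intervalIntegrable {a b : ℝ} (ha : 0 < a) (hb : 0 < b) :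
    IntervalIntegrable (fun t : ℝ => t ^ (a - 1) * (1 - t) ^ (b - 1)) volume 0 1 := by
  have h := Complex.betaIntegral_convergent (u := (a : ℂ)) (v := (b : ℂ)) (by simpa) (by simpa)
  rw [intervalIntegrable_iff] at h ⊢
  have h2 : IntegrableOn (fun t : ℝ =>
      ((t : ℂ) ^ ((a : ℂ) - 1) * ((1 : ℂ) - t) ^ ((b : ℂ) - 1)).re) (Set.uIoc (0:ℝ) 1) volume := h.re
  refine h2.congr_fun (fun t ht => ?_) measurableSet_uIoc
  rw [Set.uIoc_of_le (by norm_num : (0:ℝ) ≤ 1)] at ht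
  dsimp only
  rw [← ofReal_beta_integrand t ⟨ht.1.le, ht.2⟩, Complex.ofReal_re]

lemma betaFn_eq_Gamma {a b : ℝ} (ha : 0 < a) (hb : 0 < b) :
    betaFn a b = Real.Gamma a * Real.Gamma b / Real.Gamma (a + b) := by
  have key : ((betaFn a b : ℝ) : ℂ) = Complex.betaIntegral a b := by
    rw [betaFn, Complex.betaIntegral, ← intervalIntegral.integral_ofReal]
    refine intervalIntegral.integral_congr (fun t ht => ?_)
    rw [Set.uIcc_of_le (by norm_num : (0:ℝ) ≤ 1)] at ht
    exact ofReal_beta_integrand t ht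
  have hG : Complex.Gamma (a : ℂ) * Complex.Gamma (b : ℂ)
      = Complex.Gamma ((a : ℂ) + b) * Complex.betaIntegral a b :=
    Complex.Gamma_mul_Gamma_eq_betaIntegral (by simpa) (by simpa)
  have hab : Real.Gamma (a + b) ≠ 0 := (Real.Gamma_pos_of_pos (by linarith)).ne'
  have : Complex.betaIntegral a b
      = ((Real.Gamma a * Real.Gamma b / Real.Gamma (a + b) : ℝ) : ℂ) := by
    rw [eq_comm]
    have h1 : ((a : ℂ) + b) = ((a + b : ℝ) : ℂ) := by push_cast; ring
    rw [h1, Complex.Gamma_ofReal, Complex.Gamma_ofReal, Complex.Gamma_ofReal] at hG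
    have hne : ((Real.Gamma (a + b) : ℝ) : ℂ) ≠ 0 := by exact_mod_cast hab
    push_cast
    rw [div_eq_iff hne]
    linear_combination hG
  rw [this] at key
  exact_mod_cast key

lemma betaFn_pos_s11 {a b : ℝ} (ha : 0 < a) (hb : 0 < b) : 0 < betaFn a b := by
  rw [betaFn_eq_Gamma ha hb]
  exact div_pos (mul_pos (Real.Gamma_pos_of_pos ha) (Real.Gamma_pos_of_pos hb))
    (Real.Gamma_pos_of_pos (by linarith))

lemma betaInc_eq_Ioc {a b T : ℝ} (hT : 0 ≤ T) :
    betaInc T a b = ∫ s in Ioc (0:ℝ) T, s ^ (a - 1) * (1 - s) ^ (b - 1) :=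
  intervalIntegral.integral_of_le hT

lemma betaInc_nonneg {a b t : ℝ} (ht0 : 0 ≤ t) (ht1 : t ≤ 1) : 0 ≤ betaInc t a b := by
  refine intervalIntegral.integral_nonneg ht0 fun s hs => ?_
  exact mul_nonneg (Real.rpow_nonneg hs.1 _)
    (Real.rpow_nonneg (by linarith [hs.2] : (0:ℝ) ≤ 1 - s) _)

lemma betaInc_continuousOn {a b : ℝ} (ha : 0 < a) (hb : 0 < b) :
    ContinuousOn (fun t => betaInc t a b) (Icc (0:ℝ) 1) := by
  have hint : IntegrableOn (fun s : ℝ => s ^ (a - 1) * (1 - s) ^ (b - 1)) (Icc 0 1) volume := by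
    rw [integrableOn_Icc_iff_integrableOn_Ioc]
    have := beta_integrand_intervalIntegrable ha hb
    rwa [intervalIntegrable_iff_integrableOn_Ioc_of_le (by norm_num)] at this
  refine (intervalIntegral.continuousOn_primitive hint).congr fun t ht => ?_
  exact betaInc_eq_Ioc ht.1

lemma key_integral {a b c : ℝ} (ha : 0 < a) (hb : 0 < b) (hc : 0 < c) :
    IntegrableOn (fun t => betaInc t a b * t ^ (c - 1)) (Ioo (0:ℝ) 1) volume ∧
    ∫ t in Ioo (0:ℝ) 1, betaInc t a b * t ^ (c - 1)
      = (betaFn a b - betaFn (a + c) b) / c := by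
  set μ := volume.restrict (Ioo (0:ℝ) 1) with hμ
  set f : ℝ → ℝ := fun s => s ^ (a - 1) * (1 - s) ^ (b - 1) with hf_def
  set g : ℝ → ℝ := fun t => t ^ (c - 1) with hg_def
  have hf : Integrable f μ := by
    have := beta_integrand_intervalIntegrable ha hb
    rw [intervalIntegrable_iff_integrableOn_Ioc_of_le (by norm_num)] at this
    exact this.mono_set Ioo_subset_Ioc_self
  have hg : Integrable g μ := by
    have := intervalIntegrable_rpow' (a := 0) (b := 1) (r := c - 1) (by linarith)
    rw [intervalIntegrable_iff_integrableOn_Ioc_of_le (by norm_num)] at this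
    exact this.mono_set Ioo_subset_Ioc_self
  set F : ℝ → ℝ → ℝ := fun s t => if s ≤ t then f s * g t else 0 with hF_def
  have hFu : Integrable (Function.uncurry F) (μ.prod μ) := by
    have heq : Function.uncurry F
        = {q : ℝ × ℝ | q.1 ≤ q.2}.indicator (fun q => f q.1 * g q.2) := by
      funext q
      simp [Function.uncurry, hF_def, Set.indicator_apply, Set.mem_setOf_eq]
    rw [heq]
    exact (hf.mul_prod hg).indicator (measurableSet_le measurable_fst measurable_snd)
  have inner_right : ∀ t ∈ Ioo (0:ℝ) 1, (∫ s, F s t ∂μ) = betaInc t a b * g t := by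
    intro t ht
    have h1 : (fun s => F s t) = (Iic t).indicator (fun s => f s * g t) := by
      funext s
      simp [hF_def, Set.indicator_apply, Set.mem_Iic]
    rw [h1, MeasureTheory.integral_indicator measurableSet_Iic, hμ,
      Measure.restrict_restrict measurableSet_Iic]
    have hset : Iic t ∩ Ioo 0 1 = Ioc 0 t := by
      ext s
      simp only [mem_inter_iff, mem_Iic, mem_Ioo, mem_Ioc]
      constructor
      · rintro ⟨h1, h2, h3⟩; exact ⟨h2, h1⟩
      · rintro ⟨h1, h2⟩; exact ⟨h2, h1, lt_of_le_of_lt h2 ht.2⟩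
    rw [hset, MeasureTheory.integral_mul_const, ← betaInc_eq_Ioc ht.1.le]
  have inner_left : ∀ s ∈ Ioo (0:ℝ) 1, (∫ t, F s t ∂μ) = f s * ((1 - s ^ c) / c) := by
    intro s hs
    have h1 : (fun t => F s t) = (Ici s).indicator (fun t => f s * g t) := by
      funext t
      simp [hF_def, Set.indicator_apply, Set.mem_Ici]
    rw [h1, MeasureTheory.integral_indicator measurableSet_Ici, hμ,
      Measure.restrict_restrict measurableSet_Ici]
    have hset : Ici s ∩ Ioo 0 1 = Ico s 1 := by
      ext t
      simp only [mem_inter_iff, mem_Ici, mem_Ioo, mem_Ico]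
      constructor
      · rintro ⟨h1, h2, h3⟩; exact ⟨h1, h3⟩
      · rintro ⟨h1, h2⟩; exact ⟨h1, lt_of_lt_of_le hs.1 h1, h2⟩
    rw [hset, MeasureTheory.integral_const_mul]
    congr 1
    have : ∫ t in Ico s 1, g t = ∫ t in s..1, g t := by
      rw [MeasureTheory.integral_Ico_eq_integral_Ioo,
        intervalIntegral.integral_of_le hs.2.le, MeasureTheory.integral_Ioc_eq_integral_Ioo]
    rw [this, hg_def, integral_rpow (Or.inl (by linarith : (-1:ℝ) < c - 1))]
    rw [sub_add_cancel, Real.one_rpow]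
  have hInt : IntegrableOn (fun t => betaInc t a b * t ^ (c - 1)) (Ioo (0:ℝ) 1) volume := by
    have h2 : Integrable (fun t => ∫ s, Function.uncurry F (s, t) ∂μ) μ :=
      hFu.integral_prod_right
    refine (h2.congr ?_ : Integrable (fun t => betaInc t a b * t ^ (c - 1)) μ)
    filter_upwards [ae_restrict_mem measurableSet_Ioo] with t ht
    exact inner_right t ht
  refine ⟨hInt, ?_⟩
  have swap := MeasureTheory.integral_integral_swap hFu
  have lhs_eq : (∫ s, (∫ t, F s t ∂μ) ∂μ) = ∫ s in Ioo (0:ℝ) 1, f s * ((1 - s ^ c) / c) := by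
    rw [hμ]
    exact MeasureTheory.setIntegral_congr_fun measurableSet_Ioo fun s hs => inner_left s hs
  have rhs_eq : (∫ t, (∫ s, F s t ∂μ) ∂μ) = ∫ t in Ioo (0:ℝ) 1, betaInc t a b * t ^ (c - 1) := by
    rw [hμ]
    exact MeasureTheory.setIntegral_congr_fun measurableSet_Ioo fun t ht => inner_right t ht
  rw [← rhs_eq, ← swap, lhs_eq]
  -- now compute ∫ s in Ioo 0 1, f s * ((1 - s^c)/c)
  have hf2 : IntegrableOn (fun s => f s * s ^ c) (Ioo (0:ℝ) 1) volume := by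
    have := beta_integrand_intervalIntegrable (by linarith : (0:ℝ) < a + c) hb
    rw [intervalIntegrable_iff_integrableOn_Ioc_of_le (by norm_num)] at this
    refine ((this.mono_set Ioo_subset_Ioc_self).congr_fun (fun s hs => ?_) measurableSet_Ioo)
    show s ^ (a + c - 1) * (1 - s) ^ (b - 1) = f s * s ^ c
    rw [hf_def]
    have : a + c - 1 = (a - 1) + c := by ring
    rw [this, Real.rpow_add hs.1]
    ring
  have hf1 : IntegrableOn f (Ioo (0:ℝ) 1) volume := hf
  have split : ∀ s : ℝ, f s * ((1 - s ^ c) / c) = (f s - f s * s ^ c) / c := by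
    intro s; ring
  simp_rw [split]
  rw [MeasureTheory.integral_div, MeasureTheory.integral_sub hf1 hf2]
  congr 2
  · rw [betaFn, intervalIntegral.integral_of_le (by norm_num : (0:ℝ) ≤ 1),
      MeasureTheory.integral_Ioc_eq_integral_Ioo]
  · rw [betaFn, intervalIntegral.integral_of_le (by norm_num : (0:ℝ) ≤ 1),
      MeasureTheory.integral_Ioc_eq_integral_Ioo]
    refine MeasureTheory.setIntegral_congr_fun measurableSet_Ioo fun s hs => ?_
    show f s * s ^ c = s ^ (a + c - 1) * (1 - s) ^ (b - 1)
    rw [hf_def]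
    have : a + c - 1 = (a - 1) + c := by ring
    rw [this, Real.rpow_add hs.1]
    ring

lemma reg_value {x c : ℝ} (hx0 : 0 < x) (hx1 : x < 1) (hc : 0 < c) :
    (betaFn x (1 - x) - betaFn (x + c) (1 - x)) / (c * betaFn x (1 - x))
      = 1 / c - 1 / (c ^ 2 * betaFn x c) := by
  have h1x : (0:ℝ) < 1 - x := by linarith
  have hGx := Real.Gamma_pos_of_pos hx0
  have hG1x := Real.Gamma_pos_of_pos h1x
  have hGc := Real.Gamma_pos_of_pos hc
  have hGxc := Real.Gamma_pos_of_pos (by linarith : (0:ℝ) < x + c)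
  rw [betaFn_eq_Gamma hx0 h1x, betaFn_eq_Gamma (by linarith) h1x, betaFn_eq_Gamma hx0 hc]
  have e1 : x + (1 - x) = 1 := by ring
  have e2 : x + c + (1 - x) = c + 1 := by ring
  rw [e1, e2, Real.Gamma_one, Real.Gamma_add_one hc.ne']
  field_simp

lemma pow_binom2_le {α : ℝ} (hα : α ∈ Icc (0:ℝ) 1 ∨ α ∈ Icc (2:ℝ) 3) {u : ℝ}
    (hu0 : 0 ≤ u) (hu1 : u ≤ 1) :
    (1 - u) ^ α ≤ 1 - α * u + α * (α - 1) / 2 * u ^ 2 := by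
  have hα0 : 0 ≤ α := by rcases hα with h | h; exacts [h.1, by linarith [h.1]]
  set g : ℝ → ℝ := fun v => 1 - α * v + α * (α - 1) / 2 * v ^ 2 - (1 - v) ^ α with hg
  suffices hmono : MonotoneOn g (Icc (0:ℝ) 1) by
    have h0 : g 0 = 0 := by simp [hg, Real.one_rpow]
    have h2 := hmono (left_mem_Icc.2 zero_le_one) ⟨hu0, hu1⟩ hu0
    rw [h0] at h2
    simp only [hg] at h2
    linarith
  have hderiv : ∀ v ∈ Ioo (0:ℝ) 1,
      HasDerivAt g (-α + α * (α - 1) * v + α * (1 - v) ^ (α - 1)) v := by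
    intro v hv
    have h1 : HasDerivAt (fun v : ℝ => 1 - v) (-1) v := by
      simpa using (hasDerivAt_id v).const_sub 1
    have h2 : HasDerivAt (fun v : ℝ => (1 - v) ^ α) (α * (1 - v) ^ (α - 1) * -1) v :=
      (Real.hasDerivAt_rpow_const (Or.inl (by linarith [hv.2] : (1:ℝ) - v ≠ 0))).comp v h1
    have hA : HasDerivAt (fun v : ℝ => 1 - α * v) (-α) v := by
      simpa using ((hasDerivAt_id v).const_mul α).const_sub 1
    have hB : HasDerivAt (fun v : ℝ => α * (α - 1) / 2 * v ^ 2)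
        (α * (α - 1) / 2 * ((2:ℕ) * v ^ 1)) v := (hasDerivAt_pow 2 v).const_mul _
    have := ((hA.add hB).sub h2 : HasDerivAt (((fun v : ℝ => 1 - α * v) + fun v => α * (α - 1) / 2 * v ^ 2) - fun v => (1 - v) ^ α)
      (-α + α * (α - 1) / 2 * ((2:ℕ) * v ^ 1) - α * (1 - v) ^ (α - 1) * -1) v)
    refine this.congr_deriv ?_
    push_cast
    ring
  have hcont : ContinuousOn g (Icc (0:ℝ) 1) := by
    have hc1 : ContinuousOn (fun v : ℝ => (1 - v) ^ α) (Icc (0:ℝ) 1) := by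
      apply ContinuousOn.rpow_const (continuousOn_const.sub continuousOn_id)
      intro v _; right; exact hα0
    exact ((continuousOn_const.sub (continuousOn_const.mul continuousOn_id)).add
      (continuousOn_const.mul (continuousOn_id.pow 2))).sub hc1
  have hdiff : DifferentiableOn ℝ g (interior (Icc (0:ℝ) 1)) := by
    rw [interior_Icc]
    exact fun v hv => ((hderiv v hv).differentiableAt).differentiableWithinAt
  apply monotoneOn_of_deriv_nonneg (convex_Icc 0 1) hcont hdiff
  intro v hv
  rw [interior_Icc] at hv
  rw [(hderiv v hv).deriv]
  rcases eq_or_lt_of_le hα0 with heq | hαpos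
  · simp [← heq]
  have key : 1 - (α - 1) * v ≤ (1 - v) ^ (α - 1) := by
    rcases hα with hcase | hcase
    · rcases eq_or_lt_of_le hcase.2 with h1 | h1
      · simp [h1, Real.rpow_zero]
      · have hv1 : (0:ℝ) < 1 - v := by linarith [hv.2]
        have hb1 : (1 - v) ^ (1 - α) ≤ 1 - (1 - α) * v := by
          have h := rpow_one_add_le_one_add_mul_self (s := -v) (by linarith)
            (p := 1 - α) (by linarith) (by linarith)
          calc (1 - v) ^ (1 - α) = (1 + -v) ^ (1 - α) := by ring_nf
            _ ≤ 1 + (1 - α) * -v := h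
            _ = 1 - (1 - α) * v := by ring
        have hpos1 : (0:ℝ) < 1 - (1 - α) * v := by nlinarith
        have hposA : (0:ℝ) < (1 - v) ^ (1 - α) := Real.rpow_pos_of_pos hv1 _
        have step1 : 1 + (1 - α) * v ≤ (1 - (1 - α) * v)⁻¹ := by
          rw [inv_eq_one_div, le_div_iff₀ hpos1]
          nlinarith [sq_nonneg ((1 - α) * v)]
        have step2 : (1 - (1 - α) * v)⁻¹ ≤ ((1 - v) ^ (1 - α))⁻¹ :=
          inv_anti₀ hposA hb1
        have : 1 - (α - 1) * v ≤ ((1 - v) ^ (1 - α))⁻¹ := by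
          calc 1 - (α - 1) * v = 1 + (1 - α) * v := by ring
            _ ≤ _ := le_trans step1 step2
        rw [show α - 1 = -(1 - α) by ring, Real.rpow_neg hv1.le]
        linarith [this]
    · have h := one_add_mul_self_le_rpow_one_add (s := -v) (by linarith [hv.2])
        (p := α - 1) (by linarith [hcase.1])
      calc 1 - (α - 1) * v = 1 + (α - 1) * -v := by ring
        _ ≤ (1 + -v) ^ (α - 1) := h
        _ = (1 - v) ^ (α - 1) := by ring_nf
  nlinarith [mul_le_mul_of_nonneg_left key hα0]

theorem sufficient_condition_for_condC (α p : ℝ)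
    (hα : α ∈ Set.Icc (0:ℝ) 1 ∨ α ∈ Set.Icc (2:ℝ) 3)
    (hp1 : 2 + 2 * α < p) (hp2 : p < 2 * (2 + α))
    (h : 1 / (2 * p - 4 * α - 4)
        - 1 / ((2 * p - 4 * α - 4) ^ 2 * betaFn ((2 + α) / p) (2 * p - 4 * α - 4))
      - α * (1 / (2 * p - 4 * α)
        - 1 / ((2 * p - 4 * α) ^ 2 * betaFn ((2 + α) / p) (2 * p - 4 * α)))
      + (α * (α - 1) / 2) * (1 / (2 * p - 4 * α + 4)
        - 1 / ((2 * p - 4 * α + 4) ^ 2 * betaFn ((2 + α) / p) (2 * p - 4 * α + 4)))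
      - 1 / (4 * (α + 1)) ≤ 0) :
    condC α p := by
  have hα0 : 0 ≤ α := by rcases hα with hh | hh; exacts [hh.1, by linarith [hh.1]]
  have hp0 : 0 < p := by linarith
  unfold condC
  set x := (2 + α) / p with hx_def
  have hx0 : 0 < x := div_pos (by linarith) hp0
  have hx1 : x < 1 := (div_lt_one hp0).2 (by linarith)
  have h1x : (0:ℝ) < 1 - x := by linarith
  have hc1 : (0:ℝ) < 2 * p - 4 * α - 4 := by linarith
  have hc2 : (0:ℝ) < 2 * p - 4 * α := by linarith
  have hc3 : (0:ℝ) < 2 * p - 4 * α + 4 := by linarith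
  obtain ⟨hI1, hV1⟩ := key_integral hx0 h1x hc1
  obtain ⟨hI2, hV2⟩ := key_integral hx0 h1x hc2
  obtain ⟨hI3, hV3⟩ := key_integral hx0 h1x hc3
  have hB : 0 < betaFn x (1 - x) := betaFn_pos_s11 hx0 h1x
  set B := betaFn x (1 - x) with hB_def
  set RHS : ℝ → ℝ := fun t => (betaInc t x (1 - x) * t ^ (2 * p - 4 * α - 4 - 1)
      - α * (betaInc t x (1 - x) * t ^ (2 * p - 4 * α - 1))
      + α * (α - 1) / 2 * (betaInc t x (1 - x) * t ^ (2 * p - 4 * α + 4 - 1))) / B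
    with hRHS_def
  have hRHSint : IntegrableOn RHS (Ioo (0:ℝ) 1) volume :=
    ((hI1.sub (hI2.const_mul α)).add (hI3.const_mul (α * (α - 1) / 2))).div_const B
  have hcontG : ContinuousOn (fun t => betaInc t x (1 - x)) (Ioo (0:ℝ) 1) :=
    (betaInc_continuousOn hx0 h1x).mono Ioo_subset_Icc_self
  have hcontL : ContinuousOn
      (fun t => betaReg t x (1 - x) * t ^ (2 * p - 4 * α - 5) * (1 - t ^ 4) ^ α)
      (Ioo (0:ℝ) 1) := by
    refine ContinuousOn.mul (ContinuousOn.mul ?_ ?_) ?_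
    · exact hcontG.div_const B
    · exact ContinuousOn.rpow_const continuousOn_id (fun t ht => Or.inl (ne_of_gt ht.1))
    · exact ContinuousOn.rpow_const (continuousOn_const.sub (continuousOn_pow 4))
        (fun t ht => Or.inr hα0)
  have hbound : ∀ t ∈ Ioo (0:ℝ) 1,
      betaReg t x (1 - x) * t ^ (2 * p - 4 * α - 5) * (1 - t ^ 4) ^ α ≤ RHS t := by
    intro t ht
    have ht0 : (0:ℝ) < t := ht.1
    have ht1 : t < 1 := ht.2
    have hG0 : 0 ≤ betaInc t x (1 - x) := betaInc_nonneg ht0.le ht1.le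
    have ht4 : (0:ℝ) ≤ t ^ 4 := by positivity
    have ht41 : t ^ 4 ≤ 1 := pow_le_one₀ ht0.le ht1.le
    have hbin := pow_binom2_le hα ht4 ht41
    have hT0 : 0 ≤ betaInc t x (1 - x) * t ^ (2 * p - 4 * α - 5) :=
      mul_nonneg hG0 (Real.rpow_nonneg ht0.le _)
    have hmul := mul_le_mul_of_nonneg_left hbin hT0
    have e4 : t ^ (2 * p - 4 * α - 1) = t ^ (2 * p - 4 * α - 5) * t ^ (4:ℕ) := by
      rw [← Real.rpow_natCast t 4, ← Real.rpow_add ht0]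
      congr 1
      ring
    have e8 : t ^ (2 * p - 4 * α + 4 - 1) = t ^ (2 * p - 4 * α - 5) * t ^ (8:ℕ) := by
      rw [← Real.rpow_natCast t 8, ← Real.rpow_add ht0]
      congr 1
      ring
    have ec1 : t ^ (2 * p - 4 * α - 4 - 1) = t ^ (2 * p - 4 * α - 5) := by
      congr 1
      ring
    have lhs_eq : betaReg t x (1 - x) * t ^ (2 * p - 4 * α - 5) * (1 - t ^ 4) ^ α
        = (betaInc t x (1 - x) * t ^ (2 * p - 4 * α - 5) * (1 - t ^ 4) ^ α) / B := by
      simp only [betaReg, ← hB_def]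
      ring
    rw [hRHS_def, lhs_eq, div_le_div_iff₀ hB hB]
    refine mul_le_mul_of_nonneg_right ?_ hB.le
    refine le_trans hmul (le_of_eq ?_)
    rw [ec1, e4, e8]
    ring
  have hLHSint : IntegrableOn
      (fun t => betaReg t x (1 - x) * t ^ (2 * p - 4 * α - 5) * (1 - t ^ 4) ^ α)
      (Ioo (0:ℝ) 1) volume := by
    refine Integrable.mono' (hI1.div_const B)
      (hcontL.aestronglyMeasurable measurableSet_Ioo) ?_
    filter_upwards [ae_restrict_mem measurableSet_Ioo] with t ht
    have ht0 : (0:ℝ) < t := ht.1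
    have ht1 : t < 1 := ht.2
    have hG0 : 0 ≤ betaInc t x (1 - x) := betaInc_nonneg ht0.le ht1.le
    have hreg0 : 0 ≤ betaReg t x (1 - x) := by
      simp only [betaReg, ← hB_def]
      exact div_nonneg hG0 hB.le
    have hnn : 0 ≤ betaReg t x (1 - x) * t ^ (2 * p - 4 * α - 5) * (1 - t ^ 4) ^ α := by
      refine mul_nonneg (mul_nonneg hreg0 (Real.rpow_nonneg ht0.le _))
        (Real.rpow_nonneg ?_ _)
      nlinarith [pow_le_one₀ ht0.le ht1.le (n := 4)]
    rw [Real.norm_of_nonneg hnn]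
    have h1a : (1 - t ^ 4) ^ α ≤ 1 := by
      refine Real.rpow_le_one ?_ ?_ hα0
      · nlinarith [pow_le_one₀ ht0.le ht1.le (n := 4)]
      · nlinarith [pow_nonneg ht0.le 4]
    have ec1 : t ^ (2 * p - 4 * α - 4 - 1) = t ^ (2 * p - 4 * α - 5) := by
      congr 1
      ring
    calc betaReg t x (1 - x) * t ^ (2 * p - 4 * α - 5) * (1 - t ^ 4) ^ α
        ≤ betaReg t x (1 - x) * t ^ (2 * p - 4 * α - 5) * 1 :=
          mul_le_mul_of_nonneg_left h1a (mul_nonneg hreg0 (Real.rpow_nonneg ht0.le _))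
      _ = betaInc t x (1 - x) * t ^ (2 * p - 4 * α - 4 - 1) / B := by
          simp only [betaReg, ← hB_def, ec1]
          ring
  have hmono := MeasureTheory.setIntegral_mono_on hLHSint hRHSint measurableSet_Ioo hbound
  have hRHSval : ∫ t in Ioo (0:ℝ) 1, RHS t
      = (1 / (2 * p - 4 * α - 4)
          - 1 / ((2 * p - 4 * α - 4) ^ 2 * betaFn x (2 * p - 4 * α - 4)))
        - α * (1 / (2 * p - 4 * α) - 1 / ((2 * p - 4 * α) ^ 2 * betaFn x (2 * p - 4 * α)))
        + α * (α - 1) / 2 * (1 / (2 * p - 4 * α + 4)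
          - 1 / ((2 * p - 4 * α + 4) ^ 2 * betaFn x (2 * p - 4 * α + 4))) := by
    rw [hRHS_def]
    simp only [MeasureTheory.integral_div]
    have h12 : Integrable (fun a => betaInc a x (1 - x) * a ^ (2 * p - 4 * α - 4 - 1)
        - α * (betaInc a x (1 - x) * a ^ (2 * p - 4 * α - 1)))
        (volume.restrict (Ioo (0:ℝ) 1)) := hI1.sub (hI2.const_mul α)
    have h3 : Integrable (fun a => α * (α - 1) / 2
        * (betaInc a x (1 - x) * a ^ (2 * p - 4 * α + 4 - 1)))
        (volume.restrict (Ioo (0:ℝ) 1)) := hI3.const_mul _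
    rw [MeasureTheory.integral_add h12 h3,
      MeasureTheory.integral_sub hI1 (hI2.const_mul α),
      MeasureTheory.integral_const_mul, MeasureTheory.integral_const_mul, hV1, hV2, hV3]
    have t1 : (B - betaFn (x + (2 * p - 4 * α - 4)) (1 - x)) / (2 * p - 4 * α - 4) / B
        = 1 / (2 * p - 4 * α - 4)
          - 1 / ((2 * p - 4 * α - 4) ^ 2 * betaFn x (2 * p - 4 * α - 4)) := by
      rw [div_div, hB_def]
      exact reg_value hx0 hx1 hc1
    have t2 : (B - betaFn (x + (2 * p - 4 * α)) (1 - x)) / (2 * p - 4 * α) / B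
        = 1 / (2 * p - 4 * α) - 1 / ((2 * p - 4 * α) ^ 2 * betaFn x (2 * p - 4 * α)) := by
      rw [div_div, hB_def]
      exact reg_value hx0 hx1 hc2
    have t3 : (B - betaFn (x + (2 * p - 4 * α + 4)) (1 - x)) / (2 * p - 4 * α + 4) / B
        = 1 / (2 * p - 4 * α + 4)
          - 1 / ((2 * p - 4 * α + 4) ^ 2 * betaFn x (2 * p - 4 * α + 4)) := by
      rw [div_div, hB_def]
      exact reg_value hx0 hx1 hc3
    have split : ((B - betaFn (x + (2 * p - 4 * α - 4)) (1 - x)) / (2 * p - 4 * α - 4)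
          - α * ((B - betaFn (x + (2 * p - 4 * α)) (1 - x)) / (2 * p - 4 * α))
          + α * (α - 1) / 2 * ((B - betaFn (x + (2 * p - 4 * α + 4)) (1 - x)) / (2 * p - 4 * α + 4))) / B
        = (B - betaFn (x + (2 * p - 4 * α - 4)) (1 - x)) / (2 * p - 4 * α - 4) / B
          - α * ((B - betaFn (x + (2 * p - 4 * α)) (1 - x)) / (2 * p - 4 * α) / B)
          + α * (α - 1) / 2
            * ((B - betaFn (x + (2 * p - 4 * α + 4)) (1 - x)) / (2 * p - 4 * α + 4) / B) := by
      ring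
    rw [split, t1, t2, t3]
  rw [intervalIntegral.integral_of_le zero_le_one, MeasureTheory.integral_Ioc_eq_integral_Ioo]
  have hfinal := hmono.trans_eq hRHSval
  linarith [h, hfinal]
end
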